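/- arXiv:1504.02989 — 7 statements merged into one kernel-verified Lean document; each statement's English description precedes it below -/
import Mathlib

section
/- Let n ≥ 3 and m = (m_1,…,m_n) ∈ ℝ^n with m_0 := 1. If L_P(m) > 0 for all P ∈ 𝒫_k and all k with 1 ≤ k ≤ n−2, then there exists a polynomial P* ∈ 𝒫_n such that L_{P*}(m) ≤ L_P(m) for all P ∈ 𝒫_n. -/
open Polynomial

/-- `Lf P m = Σ_k p_k m_k`, the affine form associated to a polynomial `P`. -/
noncomputable def Lf (P : Polynomial ℝ) (m : ℕ → ℝ) : ℝ := P.sum fun k a => a * m k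

/-- `𝒫_j`: monic real polynomials of degree `j` with `j` distinct roots in `ℕ₀`,
nonnegative on `ℕ₀`. -/
def PolyP (j : ℕ) (P : Polynomial ℝ) : Prop :=
  P.Monic ∧ P.natDegree = j ∧
    (∃ S : Finset ℕ, S.card = j ∧ P = ∏ a ∈ S, (X - C (a : ℝ))) ∧
    ∀ x : ℕ, 0 ≤ P.eval (x : ℝ)

/-- `(m_1,…,m_j)` (with `m 0 = 1`) is realizable on `ℕ₀`: there is a probability
measure on the nonnegative integers whose `k`-th moment is `m k` for `k ≤ j`. -/
def RealizableN0 (j : ℕ) (m : ℕ → ℝ) : Prop :=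
  ∃ μ : ℕ → ℝ, (∀ x, 0 ≤ μ x) ∧
    ∀ k, k ≤ j → HasSum (fun x : ℕ => (x : ℝ) ^ k * μ x) (m k)

/-- I-realizability on `ℕ₀`. -/
def IRealizable (j : ℕ) (m : ℕ → ℝ) : Prop :=
  RealizableN0 j m ∧ ∀ P : Polynomial ℝ, PolyP j P ∨ PolyP (j - 1) P → 0 < Lf P m

/-- B-realizability on `ℕ₀`. -/
def BRealizable (j : ℕ) (m : ℕ → ℝ) : Prop :=
  RealizableN0 j m ∧ ∃ P : Polynomial ℝ, (PolyP j P ∨ PolyP (j - 1) P) ∧ Lf P m = 0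

open Finset


noncomputable def PS (S : Finset ℕ) : Polynomial ℝ := ∏ a ∈ S, (X - C (a : ℝ))

def Valid (S : Finset ℕ) : Prop := ∀ x : ℕ, 0 ≤ (PS S).eval (x : ℝ)

lemma PS_natDegree (S : Finset ℕ) : (PS S).natDegree = S.card := by
  rw [PS, Polynomial.natDegree_prod _ _ (fun a _ => X_sub_C_ne_zero _)]
  simp only [← Polynomial.C_eq_natCast, Polynomial.natDegree_X_sub_C]
  simp

lemma PS_monic (S : Finset ℕ) : (PS S).Monic :=
  monic_prod_of_monic _ _ (fun a _ => monic_X_sub_C _)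

lemma polyP_PS {S : Finset ℕ} {j : ℕ} (hc : S.card = j) (hv : Valid S) :
    PolyP j (PS S) :=
  ⟨PS_monic S, by rw [PS_natDegree, hc], ⟨S, hc, rfl⟩, hv⟩

variable (n : ℕ) (m : ℕ → ℝ)

noncomputable def lfw (Q : Polynomial ℝ) : ℝ := ∑ k ∈ Finset.range (n+1), Q.coeff k * m k

noncomputable def Bw (Q : Polynomial ℝ) : ℝ := ∑ k ∈ Finset.range (n+1), |Q.coeff k|

noncomputable def Mc : ℝ := 1 + ∑ k ∈ Finset.range (n+1), |m k|

noncomputable def PP (S : Finset ℕ) : ℝ := ∏ s ∈ S, ((s : ℝ) + 1)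

lemma Lf_eq_lfw {Q : Polynomial ℝ} (h : Q.natDegree ≤ n) : Lf Q m = lfw n m Q := by
  rw [Lf, Polynomial.sum_over_range' Q (fun k => by simp) (n+1) (Nat.lt_succ_of_le h)]
  rfl

lemma Mc_pos : 0 < Mc n m := by
  have : 0 ≤ ∑ k ∈ Finset.range (n+1), |m k| := Finset.sum_nonneg fun _ _ => abs_nonneg _
  rw [Mc]; linarith

lemma abs_m_le {k : ℕ} (hk : k ≤ n) : |m k| ≤ Mc n m := by
  rw [Mc]
  have h1 : |m k| ≤ ∑ k ∈ Finset.range (n+1), |m k| :=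
    Finset.single_le_sum (f := fun k => |m k|) (fun _ _ => abs_nonneg _)
      (Finset.mem_range.2 (Nat.lt_succ_of_le hk))
  linarith

lemma Bw_nonneg (Q : Polynomial ℝ) : 0 ≤ Bw n Q :=
  Finset.sum_nonneg fun _ _ => abs_nonneg _

lemma abs_lfw_le (Q : Polynomial ℝ) : |lfw n m Q| ≤ Mc n m * Bw n Q := by
  rw [lfw, Bw, Finset.mul_sum]
  refine (Finset.abs_sum_le_sum_abs _ _).trans (Finset.sum_le_sum fun k hk => ?_)
  rw [abs_mul]
  calc |Q.coeff k| * |m k| ≤ |Q.coeff k| * Mc n m := by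
        exact mul_le_mul_of_nonneg_left (abs_m_le n m (Nat.lt_succ_iff.1 (Finset.mem_range.1 hk))) (abs_nonneg _)
    _ = Mc n m * |Q.coeff k| := mul_comm _ _

lemma lfw_add (P Q : Polynomial ℝ) : lfw n m (P + Q) = lfw n m P + lfw n m Q := by
  simp [lfw, add_mul, Finset.sum_add_distrib]

lemma lfw_sub (P Q : Polynomial ℝ) : lfw n m (P - Q) = lfw n m P - lfw n m Q := by
  simp [lfw, sub_mul, Finset.sum_sub_distrib]

lemma lfw_Cmul (c : ℝ) (Q : Polynomial ℝ) : lfw n m (C c * Q) = c * lfw n m Q := by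
  simp [lfw, Finset.mul_sum, mul_assoc]

lemma lfw_one : lfw n m 1 = m 0 := by
  rw [lfw]
  rw [Finset.sum_eq_single 0]
  · simp
  · intro k _ hk; simp [Polynomial.coeff_one, hk]
  · simp

lemma Bw_X_le (Q : Polynomial ℝ) : Bw n (X * Q) ≤ Bw n Q := by
  rw [Bw, Bw, Finset.sum_range_succ']
  simp only [Polynomial.coeff_X_mul]
  have h0 : (X * Q).coeff 0 = 0 := by simp
  rw [h0, abs_zero, add_zero]
  refine Finset.sum_le_sum_of_subset_of_nonneg (Finset.range_subset_range.2 (Nat.le_succ n))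
    fun _ _ _ => abs_nonneg _

lemma abs_lfw_X_le (Q : Polynomial ℝ) : |lfw n m (X * Q)| ≤ Mc n m * Bw n Q :=
  (abs_lfw_le n m (X*Q)).trans (mul_le_mul_of_nonneg_left (Bw_X_le n Q) (Mc_pos n m).le)

lemma Bw_PS_le (S : Finset ℕ) : Bw n (PS S) ≤ PP S := by
  classical
  induction S using Finset.cons_induction with
  | empty =>
      rw [PS, PP]
      simp only [Finset.prod_empty]
      rw [Bw, Finset.sum_eq_single 0]
      · simp
      · intro k _ hk; simp [Polynomial.coeff_one, hk]
      · simp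
  | cons a S ha ih =>
      have hps : PS (Finset.cons a S ha) = (X - C (a:ℝ)) * PS S := by
        rw [PS, Finset.prod_cons]; rfl
      have hpp : PP (Finset.cons a S ha) = ((a:ℝ)+1) * PP S := by
        rw [PP, Finset.prod_cons]; rfl
      rw [hps, hpp]
      have hco : ∀ k, ((X - C (a:ℝ)) * PS S).coeff k
          = (X * PS S).coeff k - a * (PS S).coeff k := by
        intro k; rw [sub_mul, Polynomial.coeff_sub, Polynomial.coeff_C_mul]
      calc Bw n ((X - C (a:ℝ)) * PS S)
          ≤ Bw n (X * PS S) + (a:ℝ) * Bw n (PS S) := by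
            rw [Bw, Bw, Bw, Finset.mul_sum, ← Finset.sum_add_distrib]
            refine Finset.sum_le_sum fun k _ => ?_
            rw [hco k]
            refine (abs_sub _ _).trans ?_
            rw [abs_mul, Nat.abs_cast]
        _ ≤ Bw n (PS S) + (a:ℝ) * Bw n (PS S) := by
            have := Bw_X_le n (PS S)
            linarith
        _ = ((a:ℝ)+1) * Bw n (PS S) := by ring
        _ ≤ ((a:ℝ)+1) * PP S := by
            refine mul_le_mul_of_nonneg_left ih (by positivity)


lemma PS_eval (S : Finset ℕ) (x : ℝ) : (PS S).eval x = ∏ s ∈ S, (x - (s:ℝ)) := by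
  simp [PS, eval_prod]

lemma prod_pos_of_lt {S : Finset ℕ} {x : ℝ} (h : ∀ s ∈ S, (s:ℝ) < x) :
    0 < ∏ s ∈ S, (x - (s:ℝ)) :=
  Finset.prod_pos fun s hs => by have := h s hs; linarith

lemma prod_flip (S : Finset ℕ) (x : ℝ) :
    ∏ s ∈ S, (x - (s:ℝ)) = (-1)^S.card * ∏ s ∈ S, ((s:ℝ) - x) := by
  rw [← Finset.prod_const, ← Finset.prod_mul_distrib]
  exact Finset.prod_congr rfl fun s _ => by ring

lemma prod_pos_of_gt {S : Finset ℕ} {x : ℝ} (h : ∀ s ∈ S, x < (s:ℝ))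
    (he : Even S.card) : 0 < ∏ s ∈ S, (x - (s:ℝ)) := by
  rw [prod_flip, he.neg_one_pow, one_mul]
  exact Finset.prod_pos fun s hs => by have := h s hs; linarith

lemma nonneg_factor {a b : ℝ} (h : 0 ≤ a * b) (hb : 0 < b) : 0 ≤ a := by
  by_contra hlt
  push_neg at hlt
  have := mul_neg_of_neg_of_pos hlt hb
  linarith

lemma split_lemma (S : Finset ℕ) (hv : Valid S) (g : ℕ) (hg : g ∉ S) :
    PS S = PS (S.filter (fun s => s < g)) * PS (S.filter (fun s => ¬ s < g)) ∧
    (∀ u ∈ S.filter (fun s => ¬ s < g), g < u) ∧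
    Even ((S.filter (fun s => ¬ s < g)).card) ∧
    Valid (S.filter (fun s => s < g)) ∧
    Disjoint (S.filter (fun s => s < g)) (S.filter (fun s => ¬ s < g)) := by
  classical
  set T := S.filter (fun s => s < g) with hT
  set U := S.filter (fun s => ¬ s < g) with hU
  have hmul : PS S = PS T * PS U := by
    rw [hT, hU, PS, PS, PS, Finset.prod_filter_mul_prod_filter_not]
  have hgtU : ∀ u ∈ U, g < u := by
    intro u huU
    rcases Finset.mem_filter.1 huU with ⟨huS, hnot⟩
    rcases Nat.lt_or_ge u g with h | h
    · exact absurd h hnot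
    · rcases Nat.eq_or_lt_of_le h with h' | h'
      · exact absurd (h' ▸ huS) hg
      · exact h'
  have hltT : ∀ t ∈ T, t < g := fun t ht => (Finset.mem_filter.1 ht).2
  have heven : Even U.card := by
    by_contra hodd
    have hoddU : Odd U.card := Nat.not_even_iff_odd.1 hodd
    have h0 := hv g
    rw [hmul, eval_mul, PS_eval, PS_eval] at h0
    have hA : 0 < ∏ t ∈ T, ((g:ℝ) - t) :=
      prod_pos_of_lt fun t ht => by exact_mod_cast hltT t ht
    have hB : ∏ u ∈ U, ((g:ℝ) - u) = (-1)^U.card * ∏ u ∈ U, ((u:ℝ) - g) := prod_flip U g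
    have hC : 0 < ∏ u ∈ U, ((u:ℝ) - g) :=
      Finset.prod_pos fun u hu => by
        have : g < u := hgtU u hu
        have : (g:ℝ) < u := by exact_mod_cast this
        linarith
    rw [hB, hoddU.neg_one_pow] at h0
    nlinarith
  have hvT : Valid T := by
    intro x
    rcases Nat.lt_or_ge g x with hgx | hxg
    · rw [PS_eval]
      have : ∀ t ∈ T, (t:ℝ) < x := fun t ht => by
        have : t < g := hltT t ht
        have : t < x := lt_trans this hgx
        exact_mod_cast this
      exact (prod_pos_of_lt this).le
    · have h0 := hv x
      rw [hmul, eval_mul, PS_eval, PS_eval] at h0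
      have hB : 0 < ∏ u ∈ U, ((x:ℝ) - u) := by
        refine prod_pos_of_gt (fun u hu => ?_) heven
        have : x < u := lt_of_le_of_lt hxg (hgtU u hu)
        exact_mod_cast this
      rw [PS_eval]
      exact nonneg_factor h0 hB
  refine ⟨hmul, hgtU, heven, hvT, ?_⟩
  exact disjoint_filter_filter_not S S (fun s => s < g)


section
variable (n : ℕ) (m : ℕ → ℝ)

lemma lfw_expand (u u' : ℝ) (Q : Polynomial ℝ) :
    lfw n m (Q * (X - C u) * (X - C u')) =
      lfw n m (X * (X * Q)) - (u + u') * lfw n m (X * Q) + u * u' * lfw n m Q := by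
  have h : Q * (X - C u) * (X - C u')
      = X*(X*Q) - C (u+u') * (X*Q) + C (u*u') * Q := by
    rw [C_add, C_mul]; ring
  rw [h, lfw_add, lfw_sub, lfw_Cmul, lfw_Cmul]

lemma PP_pos (S : Finset ℕ) : 0 < PP S := Finset.prod_pos fun s _ => by positivity

lemma PP_le_pow_mul (V : Finset ℕ) (h : ∀ u ∈ V, 1 ≤ (u:ℝ)) :
    PP V ≤ 2^(V.card) * ∏ u ∈ V, (u:ℝ) := by
  rw [PP, ← Finset.prod_const, ← Finset.prod_mul_distrib]
  exact Finset.prod_le_prod (fun u _ => by positivity)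
    (fun u hu => by have := h u hu; linarith)

lemma one_le_prodV (V : Finset ℕ) (h : ∀ u ∈ V, 1 ≤ (u:ℝ)) : (1:ℝ) ≤ ∏ u ∈ V, (u:ℝ) := by
  calc (1:ℝ) = ∏ u ∈ V, 1 := by simp
    _ ≤ ∏ u ∈ V, (u:ℝ) := Finset.prod_le_prod (by simp) h

lemma peel (W0 : ℕ) (hW : 1 ≤ (W0:ℝ)) (T : Finset ℕ) (c : ℝ) (hc0 : 0 ≤ c)
    (hc : 3 * 2^n * Mc n m * PP T ≤ c * W0) :
    ∀ N : ℕ, ∀ V : Finset ℕ, V.card = N → Even N → (∀ u ∈ V, W0 ≤ u) →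
      T.card + V.card ≤ n → Disjoint T V →
      (∏ u ∈ V, (u:ℝ)) * (lfw n m (PS T) - V.card * c)
        ≤ lfw n m (PS T * PS V) := by
  intro N
  induction N using Nat.strong_induction_on with
  | _ N IH =>
    intro V hcard heven hWu hdeg hdisj
    rcases Nat.eq_zero_or_pos N with h0 | hNpos
    · subst h0
      rw [Finset.card_eq_zero] at hcard; subst hcard
      simp [PS]
    · have hN2 : 2 ≤ N := by rcases heven with ⟨r, hr⟩; omega
      obtain ⟨u, hu⟩ : V.Nonempty := Finset.card_pos.1 (by omega)
      obtain ⟨u', hu'⟩ : (V.erase u).Nonempty := by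
        refine Finset.card_pos.1 ?_
        rw [Finset.card_erase_of_mem hu]; omega
      have hu'V : u' ∈ V := Finset.mem_of_mem_erase hu'
      set V' := (V.erase u).erase u' with hV'
      have hsubV' : V' ⊆ V := fun x hx =>
        Finset.mem_of_mem_erase (Finset.mem_of_mem_erase hx)
      have hcV' : V'.card = N - 2 := by
        rw [hV', Finset.card_erase_of_mem hu', Finset.card_erase_of_mem hu, hcard]
        omega
      have hevenV' : Even (N - 2) := by rcases heven with ⟨r, hr⟩; exact ⟨r-1, by omega⟩
      -- real quantities
      set L := lfw n m (PS T) with hL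
      set Q := PS T * PS V' with hQdef
      set A1 := lfw n m (X * Q) with hA1def
      set A2 := lfw n m (X * (X * Q)) with hA2def
      set P' := ∏ v ∈ V', (v:ℝ) with hP'
      set mc := Mc n m with hmc
      set pt := PP T with hpt
      have hW0u : (W0:ℝ) ≤ (u:ℝ) := by exact_mod_cast hWu u hu
      have hW0u' : (W0:ℝ) ≤ (u':ℝ) := by exact_mod_cast hWu u' hu'V
      have hu1 : (1:ℝ) ≤ (u:ℝ) := le_trans hW hW0u
      have hu'1 : (1:ℝ) ≤ (u':ℝ) := le_trans hW hW0u'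
      have hV'1 : ∀ v ∈ V', (1:ℝ) ≤ (v:ℝ) := fun v hv => by
        have := hWu v (hsubV' hv); have : (W0:ℝ) ≤ (v:ℝ) := by exact_mod_cast this
        linarith
      have hP'1 : (1:ℝ) ≤ P' := one_le_prodV V' hV'1
      have hP'0 : (0:ℝ) ≤ P' := by linarith
      -- product decomposition
      have hprodV : ∏ v ∈ V, (v:ℝ) = (u:ℝ) * (u':ℝ) * P' := by
        rw [← Finset.mul_prod_erase V _ hu, ← Finset.mul_prod_erase (V.erase u) _ hu']
        ring
      have hPSV : PS T * PS V = Q * (X - C (u:ℝ)) * (X - C (u':ℝ)) := by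
        rw [hQdef, PS, PS, ← Finset.mul_prod_erase V _ hu,
          ← Finset.mul_prod_erase (V.erase u) _ hu']
        rw [PS]; ring
      have hexp : lfw n m (PS T * PS V)
          = A2 - ((u:ℝ) + (u':ℝ)) * A1 + (u:ℝ) * (u':ℝ) * lfw n m Q := by
        rw [hPSV, lfw_expand]
      -- IH
      have hdisjV' : Disjoint T V' := hdisj.mono_right hsubV'
      have hdegV' : T.card + V'.card ≤ n := by
        have := Finset.card_le_card hsubV'; omega
      have hcastN : ((N - 2 : ℕ) : ℝ) = (N:ℝ) - 2 := by
        push_cast [hN2]; ring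
      have hIH : P' * (L - ((N:ℝ) - 2) * c) ≤ lfw n m Q := by
        have h := IH (N-2) (by omega) V' hcV' hevenV' (fun v hv => hWu v (hsubV' hv))
          hdegV' hdisjV'
        rw [hcV', hcastN] at h
        exact h
      -- bounds on A1 A2
      have hBwQ : Bw n Q ≤ pt * (2^n * P') := by
        have hQeq : Q = PS (T ∪ V') := by rw [hQdef, PS, PS, PS, Finset.prod_union hdisjV']
        have h1 : Bw n Q ≤ PP (T ∪ V') := by rw [hQeq]; exact Bw_PS_le n _
        have h2 : PP (T ∪ V') = pt * PP V' := by rw [hpt, PP, PP, PP, Finset.prod_union hdisjV']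
        have h3 : PP V' ≤ 2^(V'.card) * P' := PP_le_pow_mul V' hV'1
        have h4 : (2:ℝ)^(V'.card) ≤ 2^n := by
          apply pow_le_pow_right₀ (by norm_num)
          omega
        have h5 : PP V' ≤ 2^n * P' := le_trans h3 (by
          apply mul_le_mul_of_nonneg_right h4 hP'0)
        calc Bw n Q ≤ pt * PP V' := by rw [← h2]; exact h1
          _ ≤ pt * (2^n * P') := mul_le_mul_of_nonneg_left h5 (PP_pos T).le
      set K := mc * (pt * (2^n * P')) with hK
      have hmc0 : 0 < mc := Mc_pos n m
      have hA1b : |A1| ≤ K := le_trans (abs_lfw_X_le n m Q)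
        (mul_le_mul_of_nonneg_left hBwQ hmc0.le)
      have hA2b : |A2| ≤ K := by
        refine le_trans (abs_lfw_X_le n m (X * Q)) (le_trans
          (mul_le_mul_of_nonneg_left (Bw_X_le n Q) hmc0.le)
          (mul_le_mul_of_nonneg_left hBwQ hmc0.le))
      -- key quadratic bound
      have hx : (W0:ℝ) * ((u:ℝ) + (u':ℝ) + 1) ≤ 3 * ((u:ℝ) * (u':ℝ)) := by
        have p1 : (W0:ℝ) * (u:ℝ) ≤ (u':ℝ) * (u:ℝ) :=
          mul_le_mul_of_nonneg_right hW0u' (by linarith)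
        have p2 : (W0:ℝ) * (u':ℝ) ≤ (u:ℝ) * (u':ℝ) :=
          mul_le_mul_of_nonneg_right hW0u (by linarith)
        have p3 : (u:ℝ) * 1 ≤ (u:ℝ) * (u':ℝ) :=
          mul_le_mul_of_nonneg_left hu'1 (by linarith)
        nlinarith [p1, p2, p3, hW0u]
      have huu0 : (0:ℝ) ≤ (u:ℝ) * (u':ℝ) := mul_nonneg (by linarith) (by linarith)
      have h8 : ((u:ℝ) + (u':ℝ) + 1) * K ≤ 2 * c * ((u:ℝ) * (u':ℝ) * P') := by
        have q0 : (0:ℝ) ≤ ((u:ℝ) + (u':ℝ) + 1) * P' := by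
          apply mul_nonneg (by linarith) hP'0
        have s1 : (3 * 2^n * mc * pt) * (((u:ℝ) + (u':ℝ) + 1) * P')
            ≤ (c * (W0:ℝ)) * (((u:ℝ) + (u':ℝ) + 1) * P') :=
          mul_le_mul_of_nonneg_right hc q0
        have s3 : c * (((W0:ℝ) * ((u:ℝ) + (u':ℝ) + 1)) * P')
            ≤ c * ((3 * ((u:ℝ) * (u':ℝ))) * P') :=
          mul_le_mul_of_nonneg_left (mul_le_mul_of_nonneg_right hx hP'0) hc0
        have e1 : 3 * (((u:ℝ) + (u':ℝ) + 1) * K)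
            = (3 * 2^n * mc * pt) * (((u:ℝ) + (u':ℝ) + 1) * P') := by
          rw [hK]; ring
        have e2 : (c * (W0:ℝ)) * (((u:ℝ) + (u':ℝ) + 1) * P')
            = c * (((W0:ℝ) * ((u:ℝ) + (u':ℝ) + 1)) * P') := by ring
        have e3 : c * ((3 * ((u:ℝ) * (u':ℝ))) * P') = 3 * (c * ((u:ℝ) * (u':ℝ) * P')) := by ring
        have c0' : (0:ℝ) ≤ c * ((u:ℝ) * (u':ℝ) * P') := by
          apply mul_nonneg hc0 (mul_nonneg huu0 hP'0)
        linarith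
      have h5 : ((u:ℝ) + (u':ℝ)) * A1 ≤ ((u:ℝ) + (u':ℝ)) * K :=
        mul_le_mul_of_nonneg_left (le_trans (le_abs_self _) hA1b) (by linarith)
      have h6 : -K ≤ A2 := (abs_le.1 hA2b).1
      have h7 : ((u:ℝ) * (u':ℝ)) * (P' * (L - ((N:ℝ) - 2) * c)) ≤ ((u:ℝ) * (u':ℝ)) * lfw n m Q :=
        mul_le_mul_of_nonneg_left hIH huu0
      rw [hprodV, hcard, hexp]
      have key : (u:ℝ) * (u':ℝ) * P' * (L - (N:ℝ) * c)
          = ((u:ℝ) * (u':ℝ)) * (P' * (L - ((N:ℝ) - 2) * c)) - 2 * c * ((u:ℝ) * (u':ℝ) * P') := by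
        ring
      rw [key]
      linarith


lemma lfw_PS_empty (hm0 : m 0 = 1) : lfw n m (PS ∅) = 1 := by
  have h : PS (∅ : Finset ℕ) = 1 := by rw [PS, Finset.prod_empty]
  rw [h, lfw_one n m, hm0]

lemma lfw_PS_zero (hn : 1 ≤ n) : lfw n m (PS {0}) = m 1 := by
  have h : PS ({0} : Finset ℕ) = X := by
    rw [PS, Finset.prod_singleton]
    simp
  rw [h, lfw]
  rw [Finset.sum_eq_single 1]
  · simp
  · intro k _ hk
    simp [Polynomial.coeff_X, Ne.symm hk]
  · intro h1
    exact absurd (Finset.mem_range.2 (by omega)) h1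

lemma valid_empty : Valid (∅ : Finset ℕ) := by
  intro x; simp [PS]

lemma valid_singleton {a : ℕ} (h : Valid {a}) : a = 0 := by
  have h0 := h 0
  rw [PS] at h0
  simp only [Finset.prod_singleton, eval_sub, eval_X, eval_C] at h0
  have : (a:ℝ) ≤ 0 := by push_cast at h0 ⊢; linarith
  exact_mod_cast le_antisymm this (Nat.cast_nonneg a)

lemma single_factor_le {T : Finset ℕ} {t : ℕ} (ht : t ∈ T) : (t:ℝ) + 1 ≤ PP T := by
  rw [PP, ← Finset.mul_prod_erase T _ ht]
  have h1 : (1:ℝ) ≤ ∏ s ∈ T.erase t, ((s:ℝ) + 1) := by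
    calc (1:ℝ) = ∏ s ∈ T.erase t, 1 := by simp
      _ ≤ _ := Finset.prod_le_prod (by simp)
        (fun s _ => by have h : (0:ℝ) ≤ (s:ℝ) := Nat.cast_nonneg s; linarith)
  nlinarith [Nat.cast_nonneg (α := ℝ) t]

set_option maxHeartbeats 3000000 in
lemma CO (hn1 : 1 ≤ n) (hm0 : m 0 = 1)
    (hpos : ∀ k, 1 ≤ k → k ≤ n - 2 → ∀ T : Finset ℕ, T.card = k → Valid T →
      0 < lfw n m (PS T)) :
    ∀ j, j ≤ n → ∃ α β : ℝ, 0 < α ∧ 0 ≤ β ∧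
      ∀ S : Finset ℕ, S.card ≤ j → Valid S → α * PP S - β ≤ lfw n m (PS S) := by
  intro j
  induction j using Nat.strong_induction_on with
  | _ j IH =>
    intro hjn
    -- the small-card estimate, used twice
    have hsmall : ∀ S : Finset ℕ, S.card ≤ 1 → Valid S →
        1 * PP S - (1 + |m 1|) ≤ lfw n m (PS S) := by
      intro S hcard hv
      rcases Nat.le_one_iff_eq_zero_or_eq_one.1 hcard with h0 | h1
      · rw [Finset.card_eq_zero.1 h0]
        rw [lfw_PS_empty n m hm0, PP]
        simp only [Finset.prod_empty]
        have := abs_nonneg (m 1)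
        linarith
      · obtain ⟨a, ha⟩ := Finset.card_eq_one.1 h1
        subst ha
        have ha0 : a = 0 := valid_singleton (by rwa [])
        subst ha0
        rw [lfw_PS_zero n m hn1, PP]
        simp
        have := neg_abs_le (m 1)
        linarith
    by_cases hj1 : j ≤ 1
    · exact ⟨1, 1 + |m 1|, one_pos, by positivity,
        fun S hc hv => hsmall S (le_trans hc hj1) hv⟩
    push_neg at hj1
    have hj2 : 2 ≤ j := hj1
    have hn2 : 2 ≤ n := le_trans hj2 hjn
    obtain ⟨α0, β0, hα0, hβ0, hIH2⟩ := IH (j-2) (by omega) (by omega)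
    classical
    set Pi0 : ℝ := (2*β0 + 2)/α0 with hPi0
    have hPi0pos : 0 < Pi0 := by positivity
    set R0 : ℕ := Nat.ceil Pi0 with hR0
    set 𝒯 : Finset (Finset ℕ) := (Finset.range (R0+1)).powerset.filter
      (fun T => T.card ≤ j - 2 ∧ Valid T) with h𝒯
    have h𝒯ne : 𝒯.Nonempty := ⟨∅, by
      refine Finset.mem_filter.2 ⟨Finset.empty_mem_powerset _, ?_, valid_empty⟩
      simp⟩
    set ε : ℝ := 𝒯.inf' h𝒯ne (fun T => lfw n m (PS T)) with hε
    have hεpos : 0 < ε := by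
      rw [hε, Finset.lt_inf'_iff]
      intro T hT
      obtain ⟨-, hTc, hTv⟩ := Finset.mem_filter.1 hT
      rcases Nat.eq_zero_or_pos T.card with h0 | h1
      · rw [Finset.card_eq_zero.1 h0, lfw_PS_empty n m hm0]; norm_num
      · exact hpos T.card h1 (by omega) T rfl hTv
    set δ : ℝ := min (α0/2) (ε/Pi0) with hδ
    have hδpos : 0 < δ := lt_min (by positivity) (by positivity)
    have hδle : ∀ T : Finset ℕ, T.card ≤ j - 2 → Valid T →
        δ * PP T ≤ lfw n m (PS T) := by
      intro T hTc hTv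
      by_cases hbig : 2*β0 ≤ α0 * PP T
      · have h1 := hIH2 T hTc hTv
        have h2 : δ * PP T ≤ α0/2 * PP T :=
          mul_le_mul_of_nonneg_right (min_le_left _ _) (PP_pos T).le
        linarith
      · push_neg at hbig
        have hPPlt : PP T < Pi0 := by
          rw [hPi0, lt_div_iff₀ hα0]
          nlinarith
        have hmem : T ∈ 𝒯 := by
          refine Finset.mem_filter.2 ⟨Finset.mem_powerset.2 ?_, hTc, hTv⟩
          intro t ht
          have h1 : (t:ℝ) + 1 ≤ PP T := single_factor_le ht
          have h2 : (t:ℝ) < (R0:ℝ) + 1 := by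
            have := Nat.le_ceil Pi0
            rw [← hR0] at this
            linarith
          refine Finset.mem_range.2 ?_
          exact_mod_cast h2
        have hεle : ε ≤ lfw n m (PS T) := Finset.inf'_le _ hmem
        have h3 : δ * PP T ≤ (ε/Pi0) * PP T :=
          mul_le_mul_of_nonneg_right (min_le_right _ _) (PP_pos T).le
        have h4 : (ε/Pi0) * PP T ≤ ε := by
          rw [div_mul_eq_mul_div, div_le_iff₀ hPi0pos]
          exact mul_le_mul_of_nonneg_left hPPlt.le hεpos.le
        linarith
    set mc : ℝ := Mc n m with hmc
    have hmcpos : 0 < mc := Mc_pos n m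
    set W0 : ℕ := Nat.ceil (6*n*2^n*mc/δ) + 1 with hW0
    have hW0one : (1:ℝ) ≤ (W0:ℝ) := by
      have : 1 ≤ W0 := Nat.le_add_left 1 _
      exact_mod_cast this
    have hW0ge : 6*(n:ℝ)*2^n*mc/δ ≤ (W0:ℝ) := by
      refine le_trans (Nat.le_ceil _) ?_
      have : (Nat.ceil (6*(n:ℝ)*2^n*mc/δ) : ℝ) ≤ ((Nat.ceil (6*(n:ℝ)*2^n*mc/δ) + 1 : ℕ) : ℝ) := by
        push_cast; linarith
      exact this
    set αj : ℝ := δ/(2*2^n) with hαj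
    have hαjpos : 0 < αj := by positivity
    set E : Finset (Finset ℕ) := (Finset.range (W0+j+1)).powerset.filter
      (fun S => Valid S) with hE
    set βE : ℝ := ∑ S ∈ E, |αj * PP S - lfw n m (PS S)| with hβE
    have hβEnn : 0 ≤ βE := Finset.sum_nonneg fun _ _ => abs_nonneg _
    refine ⟨min 1 αj, (1 + |m 1|) + βE, lt_min one_pos hαjpos, by positivity, ?_⟩
    intro S hcard hv
    have hPPSpos := PP_pos S
    have hminle : min 1 αj * PP S ≤ 1 * PP S :=
      mul_le_mul_of_nonneg_right (min_le_left _ _) hPPSpos.le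
    have hminle2 : min 1 αj * PP S ≤ αj * PP S :=
      mul_le_mul_of_nonneg_right (min_le_right _ _) hPPSpos.le
    by_cases hc1 : S.card ≤ 1
    · have := hsmall S hc1 hv
      linarith
    push_neg at hc1
    obtain ⟨g, hgI, hgS⟩ : ∃ g, g ∈ Finset.Icc W0 (W0+j) ∧ g ∉ S := by
      by_contra h
      push_neg at h
      have hsub : Finset.Icc W0 (W0+j) ⊆ S := fun g hg => h g hg
      have hcc := Finset.card_le_card hsub
      rw [Nat.card_Icc] at hcc
      omega
    obtain ⟨hgW0, hgtop⟩ := Finset.mem_Icc.1 hgI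
    obtain ⟨hmulSP, hgtU, hevenU, hvT, hdisjTU⟩ := split_lemma S hv g hgS
    set T := S.filter (fun s => s < g) with hTdef
    set U := S.filter (fun s => ¬ s < g) with hUdef
    have hTUcard : T.card + U.card = S.card := by
      rw [hTdef, hUdef]
      exact Finset.card_filter_add_card_filter_not _
    by_cases hUe : U = ∅
    · -- exceptional bounded case
      have hSsub : S ⊆ Finset.range (W0+j+1) := by
        intro s hs
        have hslt : s < g := by
          by_contra hns
          have : s ∈ U := Finset.mem_filter.2 ⟨hs, hns⟩
          rw [hUe] at this
          exact absurd this (Finset.notMem_empty s)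
        exact Finset.mem_range.2 (by omega)
      have hSE : S ∈ E := Finset.mem_filter.2 ⟨Finset.mem_powerset.2 hSsub, hv⟩
      have hterm : |αj * PP S - lfw n m (PS S)| ≤ βE :=
        Finset.single_le_sum (f := fun S => |αj * PP S - lfw n m (PS S)|)
          (fun _ _ => abs_nonneg _) hSE
      have := abs_le.1 hterm
      linarith [this.2, abs_nonneg (m 1)]
    · have hUne : U.Nonempty := Finset.nonempty_of_ne_empty hUe
      have hU2 : 2 ≤ U.card := by
        rcases hevenU with ⟨r, hr⟩
        have : 0 < U.card := Finset.card_pos.2 hUne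
        omega
      have hTcard : T.card ≤ j - 2 := by omega
      have hU1 : ∀ u ∈ U, 1 ≤ (u:ℝ) := by
        intro u hu
        have : g < u := hgtU u hu
        have : 1 ≤ u := by omega
        exact_mod_cast this
      have hUW0 : ∀ u ∈ U, W0 ≤ u := by
        intro u hu
        have := hgtU u hu
        omega
      have hδT := hδle T hTcard hvT
      set cT : ℝ := (δ/(2*n)) * PP T with hcT
      have hn0 : (0:ℝ) < n := by
        have h : 0 < n := by omega
        exact_mod_cast h
      have hcT0 : 0 ≤ cT := by
        rw [hcT]
        exact mul_nonneg (div_nonneg hδpos.le (by linarith)) (PP_pos T).le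
      have hcTineq : 3 * 2^n * mc * PP T ≤ cT * W0 := by
        have hn2e : (2:ℝ) * n ≠ 0 := by positivity
        have hδne : δ ≠ 0 := ne_of_gt hδpos
        have hkey : (δ/(2*(n:ℝ))) * (6*(n:ℝ)*2^n*mc/δ) = 3*2^n*mc := by
          field_simp
          ring
        have h1 : (δ/(2*(n:ℝ))) * (6*(n:ℝ)*2^n*mc/δ) ≤ (δ/(2*(n:ℝ))) * W0 :=
          mul_le_mul_of_nonneg_left hW0ge (div_nonneg hδpos.le (by linarith))
        rw [hkey] at h1
        calc 3 * 2^n * mc * PP T ≤ ((δ/(2*n)) * W0) * PP T :=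
              mul_le_mul_of_nonneg_right h1 (PP_pos T).le
          _ = cT * W0 := by rw [hcT]; ring
      have hpeel := peel n m W0 hW0one T cT hcT0 hcTineq U.card U rfl hevenU hUW0
        (by omega) hdisjTU
      rw [← hmulSP] at hpeel
      -- lower bound the RHS of hpeel
      have hcardU : (U.card : ℝ) * cT ≤ (δ/2) * PP T := by
        have h1 : (U.card : ℝ) ≤ (n:ℝ) := by
          exact_mod_cast le_trans (by omega : U.card ≤ j) hjn
        have h2 : (U.card : ℝ) * cT ≤ (n:ℝ) * cT :=
          mul_le_mul_of_nonneg_right h1 hcT0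
        have h3 : (n:ℝ) * cT = (δ/2) * PP T := by
          rw [hcT]
          field_simp [hn0.ne']
        linarith
      have hstage1 : (δ/2) * PP T ≤ lfw n m (PS T) - (U.card : ℝ) * cT := by
        linarith
      have hprodU1 : (1:ℝ) ≤ ∏ u ∈ U, (u:ℝ) := one_le_prodV U hU1
      have hstage2 : (∏ u ∈ U, (u:ℝ)) * ((δ/2) * PP T) ≤ lfw n m (PS S) := by
        calc (∏ u ∈ U, (u:ℝ)) * ((δ/2) * PP T)
            ≤ (∏ u ∈ U, (u:ℝ)) * (lfw n m (PS T) - (U.card : ℝ) * cT) :=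
              mul_le_mul_of_nonneg_left hstage1 (by linarith)
          _ ≤ _ := hpeel
      have hPPU : PP U ≤ 2^n * ∏ u ∈ U, (u:ℝ) := by
        refine le_trans (PP_le_pow_mul U hU1) ?_
        refine mul_le_mul_of_nonneg_right ?_ (by linarith)
        refine pow_le_pow_right₀ (by norm_num) ?_
        omega
      have hPPmul : PP S = PP T * PP U := by
        rw [hTdef, hUdef, PP, PP, PP]
        exact (Finset.prod_filter_mul_prod_filter_not _ _ _).symm
      have hfinal : αj * PP S ≤ (∏ u ∈ U, (u:ℝ)) * ((δ/2) * PP T) := by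
        rw [hPPmul, hαj]
        have h1 : (δ/(2*2^n)) * (PP T * PP U) = (PP U / 2^n) * ((δ/2) * PP T) := by
          ring
        rw [h1]
        refine mul_le_mul_of_nonneg_right ?_
          (mul_nonneg (by linarith) (PP_pos T).le)
        rw [div_le_iff₀ (by positivity : (0:ℝ) < 2^n)]
        calc PP U ≤ 2^n * ∏ u ∈ U, (u:ℝ) := hPPU
          _ = (∏ u ∈ U, (u:ℝ)) * 2^n := by ring
      linarith [abs_nonneg (m 1)]

end

/-- If `L_P(m) > 0` for all `P ∈ 𝒫_k`, `1 ≤ k ≤ n-2`, then there is a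
minimizing polynomial `P* ∈ 𝒫_n` for `L_·(m)` over `𝒫_n`. -/
theorem exists_minimizing_poly (n : ℕ) (hn : 3 ≤ n) (m : ℕ → ℝ) (hm0 : m 0 = 1)
    (hpos : ∀ k, 1 ≤ k → k ≤ n - 2 → ∀ P, PolyP k P → 0 < Lf P m) :
    ∃ Pstar, PolyP n Pstar ∧ ∀ P, PolyP n P → Lf Pstar m ≤ Lf P m := by
  classical
  have hn1 : 1 ≤ n := by omega
  have hpos' : ∀ k, 1 ≤ k → k ≤ n - 2 → ∀ T : Finset ℕ, T.card = k → Valid T →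
      0 < lfw n m (PS T) := by
    intro k hk1 hk2 T hTc hTv
    have h := hpos k hk1 hk2 (PS T) (polyP_PS hTc hTv)
    rwa [Lf_eq_lfw n m (by rw [PS_natDegree]; omega)] at h
  obtain ⟨α, β, hα, hβ, hCO⟩ := CO n m hn1 hm0 hpos' n le_rfl
  have hvrange : Valid (Finset.range n) := by
    intro x
    rw [PS_eval]
    rcases Nat.lt_or_ge x n with h | h
    · refine le_of_eq (Finset.prod_eq_zero (Finset.mem_range.2 h) ?_).symm
      simp
    · refine (prod_pos_of_lt fun s hs => ?_).le
      have hsx : s < x := lt_of_lt_of_le (Finset.mem_range.1 hs) h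
      exact_mod_cast hsx
  set c0 := lfw n m (PS (Finset.range n)) with hc0
  set R1 : ℕ := max n (Nat.ceil ((c0 + β)/α) + 1) with hR1
  set Cand : Finset (Finset ℕ) := (Finset.range R1).powerset.filter
    (fun S => S.card = n ∧ Valid S) with hCand
  have hc0mem : Finset.range n ∈ Cand := by
    refine Finset.mem_filter.2 ⟨Finset.mem_powerset.2 ?_, by simp, hvrange⟩
    exact Finset.range_subset_range.2 (le_max_left _ _)
  obtain ⟨Sstar, hSstar, hmin⟩ :=
    Finset.exists_min_image Cand (fun S => lfw n m (PS S)) ⟨_, hc0mem⟩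
  obtain ⟨-, hSc, hSv⟩ := Finset.mem_filter.1 hSstar
  refine ⟨PS Sstar, polyP_PS hSc hSv, ?_⟩
  intro P hP
  obtain ⟨hmon, hdeg, ⟨S, hScard, hPeq⟩, hnn⟩ := hP
  have hPeq' : P = PS S := hPeq
  subst hPeq'
  have hvS : Valid S := hnn
  rw [Lf_eq_lfw n m (by rw [PS_natDegree, hSc]), Lf_eq_lfw n m (by rw [PS_natDegree, hScard])]
  by_cases hle : lfw n m (PS S) ≤ c0
  · have h1 := hCO S (le_of_eq hScard) hvS
    have hSsub : S ⊆ Finset.range R1 := by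
      intro s hs
      have h2 : (s:ℝ) + 1 ≤ PP S := single_factor_le hs
      have h3 : α * PP S ≤ c0 + β := by linarith
      have h4 : PP S ≤ (c0 + β)/α := by
        rw [le_div_iff₀ hα]
        linarith [mul_comm α (PP S)]
      have h5 : (c0 + β)/α ≤ (Nat.ceil ((c0 + β)/α) : ℝ) := Nat.le_ceil _
      have h6 : (s:ℝ) + 1 ≤ (Nat.ceil ((c0 + β)/α) : ℝ) := by linarith
      have h7 : s + 1 ≤ Nat.ceil ((c0 + β)/α) := by exact_mod_cast h6
      refine Finset.mem_range.2 ?_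
      have h8 : Nat.ceil ((c0 + β)/α) + 1 ≤ R1 := le_max_right _ _
      omega
    have hSmem : S ∈ Cand :=
      Finset.mem_filter.2 ⟨Finset.mem_powerset.2 hSsub, hScard, hvS⟩
    exact hmin S hSmem
  · push_neg at hle
    calc lfw n m (PS Sstar) ≤ c0 := hmin _ hc0mem
      _ ≤ lfw n m (PS S) := hle.le
end

section
/- Fix n ≥ 2 and any P_α ∈ 𝒫_n. Then there exists a moment vector m = (m_1,…,m_n) ∈ ℝ^n (with m_0 := 1) which is not realizable on ℕ₀, which satisfies L_P(m) ≥ 0 for all P ∈ 𝒫_n with P ≠ P_α, satisfies L_P(m) > 0 for all P ∈ 𝒫_{n−1}, but has L_{P_α}(m) < 0. -/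
open Polynomial

lemma Lf_formula (P : ℝ[X]) (S : Finset ℕ) (n : ℕ) (ε c : ℝ) :
    Lf P (fun k => c * (∑ a ∈ S, (a:ℝ)^k) - if k = n then ε else 0)
      = c * (∑ a ∈ S, P.eval (a:ℝ)) - ε * P.coeff n := by
  unfold Lf
  rw [Polynomial.sum_def]
  have h1 : ∀ a : ℕ, P.eval (a:ℝ) = ∑ k ∈ P.support, P.coeff k * (a:ℝ)^k := by
    intro a; rw [eval_eq_sum, Polynomial.sum_def]
  simp_rw [mul_sub, Finset.sum_sub_distrib, h1, Finset.mul_sum]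
  congr 1
  · rw [Finset.sum_comm]
    apply Finset.sum_congr rfl; intro k _
    apply Finset.sum_congr rfl; intro a _; ring
  · simp_rw [mul_ite, mul_zero, Finset.sum_ite_eq' P.support n]
    by_cases h : n ∈ P.support
    · simp [h, mul_comm]
    · simp [h, Polynomial.notMem_support_iff.mp h]

lemma eval_prod_ge_one (T : Finset ℕ) (a : ℕ) (ha : a ∉ T)
    (hnn : 0 ≤ ∏ b ∈ T, ((a:ℝ) - b)) : 1 ≤ ∏ b ∈ T, ((a:ℝ) - b) := by
  have hcast : ∏ b ∈ T, ((a:ℝ) - b) = ((∏ b ∈ T, ((a:ℤ) - b) : ℤ) : ℝ) := by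
    push_cast; ring
  rw [hcast] at hnn ⊢
  have hne : (∏ b ∈ T, ((a:ℤ) - b)) ≠ 0 := by
    apply Finset.prod_ne_zero_iff.mpr
    intro b hb
    have : a ≠ b := fun h => ha (h ▸ hb)
    intro h
    exact this (by exact_mod_cast sub_eq_zero.mp h)
  have h0 : (0:ℤ) ≤ ∏ b ∈ T, ((a:ℤ) - b) := by exact_mod_cast hnn
  have : (1:ℤ) ≤ ∏ b ∈ T, ((a:ℤ) - b) := lt_of_le_of_ne h0 (Ne.symm hne)
  exact_mod_cast this

lemma eval_prod_nat (T : Finset ℕ) (a : ℕ) :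
    (∏ b ∈ T, (X - C (b:ℝ))).eval (a:ℝ) = ∏ b ∈ T, ((a:ℝ) - b) := by
  simp [eval_prod]

/-- For every `P_α ∈ 𝒫_n` there is a non-realizable moment vector satisfying all
the conditions of Theorem 3.2 except `L_{P_α}(m) ≥ 0`: it has `L_{P_α}(m) < 0`,
`L_P(m) ≥ 0` for all other `P ∈ 𝒫_n`, and `L_P(m) > 0` for all `P ∈ 𝒫_{n-1}`. -/
theorem exists_nonrealizable_violating_only_Palpha (n : ℕ) (hn : 2 ≤ n)
    (Pa : Polynomial ℝ) (hPa : PolyP n Pa) :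
    ∃ m : ℕ → ℝ, m 0 = 1 ∧ ¬ RealizableN0 n m ∧
      (∀ P, PolyP n P → P ≠ Pa → 0 ≤ Lf P m) ∧
      (∀ P, PolyP (n - 1) P → 0 < Lf P m) ∧
      Lf Pa m < 0 := by
  obtain ⟨hmon, hdeg, ⟨S, hScard, hSprod⟩, hnonneg⟩ := hPa
  have hn0 : (0:ℝ) < n := by positivity
  set ε : ℝ := 1 / (2 * n) with hε
  have hε0 : 0 < ε := by positivity
  set m : ℕ → ℝ := fun k => (1/n) * (∑ a ∈ S, (a:ℝ)^k) - if k = n then ε else 0 with hm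
  -- generic evaluation helper for members of 𝒫_j
  have key : ∀ P : ℝ[X], Lf P m = (1/n) * (∑ a ∈ S, P.eval (a:ℝ)) - ε * P.coeff n :=
    fun P => Lf_formula P S n ε (1/n)
  -- Lf Pa m = -ε
  have hPaeval : ∀ a ∈ S, Pa.eval (a:ℝ) = 0 := by
    intro a ha
    rw [hSprod, eval_prod_nat]
    exact Finset.prod_eq_zero ha (by ring)
  have hPacoeff : Pa.coeff n = 1 := by
    have := hmon.coeff_natDegree; rwa [hdeg] at this
  have hLfPa : Lf Pa m = -ε := by
    rw [key, hPacoeff, Finset.sum_congr rfl hPaeval]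
    simp
  -- existence of a good point for polynomials with small root sets
  have good : ∀ (P : ℝ[X]) (T : Finset ℕ), P = ∏ a ∈ T, (X - C (a:ℝ)) →
      (∀ x : ℕ, 0 ≤ P.eval (x:ℝ)) → ¬ S ⊆ T →
      1 ≤ ∑ a ∈ S, P.eval (a:ℝ) := by
    intro P T hT hPnn hST
    obtain ⟨a, haS, haT⟩ := Finset.not_subset.mp hST
    have h1 : 1 ≤ P.eval (a:ℝ) := by
      rw [hT, eval_prod_nat]
      exact eval_prod_ge_one T a haT (by rw [← eval_prod_nat, ← hT]; exact hPnn a)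
    calc (1:ℝ) ≤ P.eval (a:ℝ) := h1
      _ ≤ ∑ a ∈ S, P.eval (a:ℝ) := Finset.single_le_sum (fun b _ => hPnn b) haS
  refine ⟨m, ?_, ?_, ?_, ?_, by rw [hLfPa]; linarith⟩
  · -- m 0 = 1
    have hne : (n:ℝ) ≠ 0 := by positivity
    show (1/(n:ℝ)) * (∑ a ∈ S, (a:ℝ)^0) - (if 0 = n then ε else 0) = 1
    rw [if_neg (by omega)]
    simp only [pow_zero, Finset.sum_const, nsmul_eq_mul, mul_one, hScard]
    field_simp
    norm_num
  · -- not realizable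
    rintro ⟨ν, hν0, hνm⟩
    have hsupp : ∀ k ∈ Pa.support, k ≤ n := by
      intro k hk; have := Polynomial.le_natDegree_of_mem_supp k hk; omega
    have hs : HasSum (fun x : ℕ => ∑ k ∈ Pa.support, Pa.coeff k * ((x:ℝ)^k * ν x))
        (∑ k ∈ Pa.support, Pa.coeff k * m k) := by
      apply hasSum_sum
      intro k hk
      exact (hνm k (hsupp k hk)).mul_left _
    have heq : (fun x : ℕ => ∑ k ∈ Pa.support, Pa.coeff k * ((x:ℝ)^k * ν x))
        = fun x : ℕ => Pa.eval (x:ℝ) * ν x := by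
      funext x
      rw [eval_eq_sum, Polynomial.sum_def, Finset.sum_mul]
      apply Finset.sum_congr rfl; intro k _; ring
    have hval : (∑ k ∈ Pa.support, Pa.coeff k * m k) = Lf Pa m := by
      rw [Lf, Polynomial.sum_def]
    rw [heq, hval] at hs
    have : 0 ≤ Lf Pa m :=
      hasSum_le (fun x => by
        have := hnonneg x; have := hν0 x; positivity) hasSum_zero hs
    rw [hLfPa] at this; linarith
  · -- P ∈ 𝒫_n, P ≠ Pa
    rintro P ⟨hPmon, hPdeg, ⟨T, hTcard, hTprod⟩, hPnn⟩ hne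
    have hPcoeff : P.coeff n = 1 := by
      have := hPmon.coeff_natDegree; rwa [hPdeg] at this
    have hST : ¬ S ⊆ T := by
      intro h
      have : S = T := Finset.eq_of_subset_of_card_le h (by omega)
      exact hne (by rw [hTprod, ← this, ← hSprod])
    have := good P T hTprod hPnn hST
    rw [key, hPcoeff]
    have : 1/(n:ℝ) * 1 ≤ 1/n * ∑ a ∈ S, P.eval (a:ℝ) := by
      apply mul_le_mul_of_nonneg_left this; positivity
    have hεn : ε * 1 = 1/(2*n) := by rw [hε]; ring
    rw [mul_one]
    have h2 : 1/(2*(n:ℝ)) < 1/n := by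
      apply div_lt_div_of_pos_left <;> linarith
    linarith [h2]
  · -- P ∈ 𝒫_{n-1}
    rintro P ⟨hPmon, hPdeg, ⟨T, hTcard, hTprod⟩, hPnn⟩
    have hPcoeff : P.coeff n = 0 :=
      Polynomial.coeff_eq_zero_of_natDegree_lt (by omega)
    have hST : ¬ S ⊆ T := by
      intro h
      have := Finset.card_le_card h
      omega
    have := good P T hTprod hPnn hST
    rw [key, hPcoeff, mul_zero, sub_zero]
    have : 1/(n:ℝ) * 1 ≤ 1/n * ∑ a ∈ S, P.eval (a:ℝ) := by
      apply mul_le_mul_of_nonneg_left this; positivity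
    have : 0 < 1/(n:ℝ) := by positivity
    linarith
end

section
/- Let n ≥ 2, m = (m_1,…,m_n) ∈ ℝ^n with m_0 := 1, and suppose (m_1,…,m_{n−1}) is realizable on ℕ₀ and there exist i ∈ {1,2} and P ∈ 𝒫_{n−i} with L_P(m) = 0. Then (m_1,…,m_{n−1}) is realized by a unique probability measure on ℕ₀, and the support of this measure is contained in the set of zeros of P. -/
open Polynomial

/-- If a measure `ν` realizes the moments `m k` for `k ≤ N`, then for any polynomial
`Q` of degree at most `N`, the series `Σ_x Q(x) ν(x)` sums to `Lf Q m`. -/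
lemma hasSum_eval_mul (m ν : ℕ → ℝ) (N : ℕ)
    (hν : ∀ k, k ≤ N → HasSum (fun x : ℕ => (x : ℝ) ^ k * ν x) (m k))
    (Q : Polynomial ℝ) (hQ : Q.natDegree ≤ N) :
    HasSum (fun x : ℕ => Q.eval (x : ℝ) * ν x) (Lf Q m) := by
  have key : HasSum (fun x : ℕ => ∑ k ∈ Q.support, Q.coeff k * ((x : ℝ) ^ k * ν x))
      (∑ k ∈ Q.support, Q.coeff k * m k) := by
    refine hasSum_sum fun k hk => ?_
    exact (hν k (le_trans (Polynomial.le_natDegree_of_mem_supp k hk) hQ)).mul_left _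
  have hLf : Lf Q m = ∑ k ∈ Q.support, Q.coeff k * m k := by
    rw [Lf, Polynomial.sum_def]
  have hfun : (fun x : ℕ => Q.eval (x : ℝ) * ν x)
      = fun x : ℕ => ∑ k ∈ Q.support, Q.coeff k * ((x : ℝ) ^ k * ν x) := by
    funext x
    rw [eval_eq_sum, Polynomial.sum_def, Finset.sum_mul]
    exact Finset.sum_congr rfl fun k _ => by ring
  rw [hLf, hfun]
  exact key

/-- If `(m_1,…,m_{n-1})` is realizable on `ℕ₀` and `L_P(m) = 0` for some
`P ∈ 𝒫_{n-i}`, `i ∈ {1,2}`, then `(m_1,…,m_{n-1})` is realized by a unique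
probability measure on `ℕ₀`, whose support is contained in the zero set of `P`. -/
theorem unique_measure_support_in_zeros (n : ℕ) (hn : 2 ≤ n) (m : ℕ → ℝ)
    (hm0 : m 0 = 1) (hreal : RealizableN0 (n - 1) m)
    (i : ℕ) (hi : i = 1 ∨ i = 2) (P : Polynomial ℝ) (hP : PolyP (n - i) P)
    (hLP : Lf P m = 0) :
    ∃ μ : ℕ → ℝ,
      ((∀ x, 0 ≤ μ x) ∧
        ∀ k, k ≤ n - 1 → HasSum (fun x : ℕ => (x : ℝ) ^ k * μ x) (m k)) ∧
      (∀ x : ℕ, μ x ≠ 0 → P.eval (x : ℝ) = 0) ∧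
      ∀ μ' : ℕ → ℝ,
        ((∀ x, 0 ≤ μ' x) ∧
          ∀ k, k ≤ n - 1 → HasSum (fun x : ℕ => (x : ℝ) ^ k * μ' x) (m k)) →
        μ' = μ := by
  obtain ⟨hmonic, hdeg, ⟨S, hcard, hprod⟩, hnonneg⟩ := hP
  have hdegle : P.natDegree ≤ n - 1 := by rw [hdeg]; omega
  -- characterization of zeros of P among naturals
  have hevalzero : ∀ x : ℕ, P.eval (x : ℝ) = 0 ↔ x ∈ S := by
    intro x
    rw [hprod, eval_prod]
    simp only [eval_sub, eval_X, eval_C]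
    constructor
    · intro h
      obtain ⟨a, ha, h0⟩ := Finset.prod_eq_zero_iff.mp h
      have hxa : (x : ℝ) = (a : ℝ) := by linarith
      have : x = a := Nat.cast_injective hxa
      rwa [this]
    · intro hx
      exact Finset.prod_eq_zero hx (by simp)
  obtain ⟨μ, hμpos, hμmom⟩ := hreal
  -- any realizing measure vanishes outside S
  have supp : ∀ ν : ℕ → ℝ, (∀ x, 0 ≤ ν x) →
      (∀ k, k ≤ n - 1 → HasSum (fun x : ℕ => (x : ℝ) ^ k * ν x) (m k)) →
      ∀ x : ℕ, x ∉ S → ν x = 0 := by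
    intro ν hpos hmom x hx
    have hs := hasSum_eval_mul m ν (n - 1) hmom P hdegle
    rw [hLP] at hs
    have hterm : ∀ y : ℕ, 0 ≤ P.eval (y : ℝ) * ν y :=
      fun y => mul_nonneg (hnonneg y) (hpos y)
    have hle : P.eval (x : ℝ) * ν x ≤ 0 := le_hasSum hs x fun j _ => hterm j
    have h0 : P.eval (x : ℝ) * ν x = 0 := le_antisymm hle (hterm x)
    have hPx : P.eval (x : ℝ) ≠ 0 := fun h => hx ((hevalzero x).mp h)
    exact (mul_eq_zero.mp h0).resolve_left hPx
  refine ⟨μ, ⟨hμpos, hμmom⟩, ?_, ?_⟩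
  · intro x hx
    by_contra hP0
    exact hx (supp μ hμpos hμmom x fun hxS => hP0 ((hevalzero x).mpr hxS))
  · rintro μ' ⟨hpos', hmom'⟩
    funext x
    by_cases hxS : x ∈ S
    · -- Lagrange polynomial isolating the point x
      set Q : Polynomial ℝ := ∏ b ∈ S.erase x, (X - C (b : ℝ)) with hQdef
      have hQdeg : Q.natDegree ≤ n - 1 := by
        have h1 : Q.natDegree = (S.erase x).card := by
          rw [hQdef, natDegree_prod_of_monic (S.erase x) (fun b => X - C (b : ℝ)) (fun b _ => monic_X_sub_C _)]
          simp only [natDegree_X_sub_C, Finset.sum_const, smul_eq_mul, mul_one]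
        rw [h1, Finset.card_erase_of_mem hxS, hcard]
        omega
      have h1 := hasSum_eval_mul m μ (n - 1) hμmom Q hQdeg
      have h2 := hasSum_eval_mul m μ' (n - 1) hmom' Q hQdeg
      have hs1 : HasSum (fun y : ℕ => Q.eval (y : ℝ) * μ y)
          (∑ y ∈ S, Q.eval (y : ℝ) * μ y) :=
        hasSum_sum_of_ne_finset_zero fun y hy => by
          rw [supp μ hμpos hμmom y hy, mul_zero]
      have hs2 : HasSum (fun y : ℕ => Q.eval (y : ℝ) * μ' y)
          (∑ y ∈ S, Q.eval (y : ℝ) * μ' y) :=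
        hasSum_sum_of_ne_finset_zero fun y hy => by
          rw [supp μ' hpos' hmom' y hy, mul_zero]
      have e1 : ∑ y ∈ S, Q.eval (y : ℝ) * μ y = Lf Q m := hs1.unique h1
      have e2 : ∑ y ∈ S, Q.eval (y : ℝ) * μ' y = Lf Q m := hs2.unique h2
      have hQy : ∀ y ∈ S, y ≠ x → Q.eval (y : ℝ) = 0 := by
        intro y hy hyx
        rw [hQdef, eval_prod]
        exact Finset.prod_eq_zero (Finset.mem_erase.mpr ⟨hyx, hy⟩) (by simp)
      have sred : ∀ ν : ℕ → ℝ, ∑ y ∈ S, Q.eval (y : ℝ) * ν y = Q.eval (x : ℝ) * ν x := by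
        intro ν
        refine Finset.sum_eq_single_of_mem x hxS fun y hy hyx => ?_
        rw [hQy y hy hyx, zero_mul]
      have hQx : Q.eval (x : ℝ) ≠ 0 := by
        rw [hQdef, eval_prod]
        refine Finset.prod_ne_zero_iff.mpr fun b hb => ?_
        simp only [eval_sub, eval_X, eval_C]
        have hbx : b ≠ x := (Finset.mem_erase.mp hb).1
        intro h
        exact hbx (Nat.cast_injective (by linarith : (b : ℝ) = (x : ℝ)))
      have : Q.eval (x : ℝ) * μ' x = Q.eval (x : ℝ) * μ x := by
        rw [← sred μ', ← sred μ, e1, e2]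
      exact mul_left_cancel₀ hQx this
    · rw [supp μ' hpos' hmom' x hxS, supp μ hμpos hμmom x hxS]
end

section
/- Let n ≥ 2, m = (m_1,…,m_n) ∈ ℝ^n with m_0 := 1, and suppose (m_1,…,m_{n−1}) is realizable on ℕ₀ and there exist i ∈ {1,2} and P ∈ 𝒫_{n−i} with L_P(m) = 0. Then (m_1,…,m_n) is realizable on ℕ₀ if and only if L_{x^i P}(m) = 0, where (x^i P)(x) := x^i·P(x); moreover the condition L_{x^i P}(m) = 0 uniquely determines m_n in terms of m_1,…,m_{n−1}. -/
open Polynomial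

lemma Lf_eq_sum (Q : Polynomial ℝ) (m : ℕ → ℝ) :
    Lf Q m = ∑ k ∈ Q.support, Q.coeff k * m k := by
  rw [Lf, Polynomial.sum_def]

/-- Key lemma: representation of `Lf` as a series against the measure. -/
lemma hasSum_eval (Q : Polynomial ℝ) (d : ℕ) (hQ : Q.natDegree ≤ d) (μ : ℕ → ℝ) (m : ℕ → ℝ)
    (h : ∀ k, k ≤ d → HasSum (fun x : ℕ => (x : ℝ) ^ k * μ x) (m k)) :
    HasSum (fun x : ℕ => Q.eval (x : ℝ) * μ x) (Lf Q m) := by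
  have h1 : HasSum (fun x : ℕ => ∑ k ∈ Q.support, Q.coeff k * ((x : ℝ) ^ k * μ x))
      (∑ k ∈ Q.support, Q.coeff k * m k) := by
    refine hasSum_sum fun k hk => ?_
    exact (h k ((Polynomial.le_natDegree_of_mem_supp k hk).trans hQ)).mul_left _
  rw [Lf_eq_sum]
  convert h1 using 2 with x
  rw [Polynomial.eval_eq_sum, Polynomial.sum_def, Finset.sum_mul]
  exact Finset.sum_congr rfl fun k _ => by ring

lemma Lf_split (Q : Polynomial ℝ) (u : ℕ → ℝ) (n : ℕ) (hn : n ∈ Q.support) :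
    Lf Q u = Q.coeff n * u n + ∑ k ∈ Q.support.erase n, Q.coeff k * u k := by
  rw [Lf_eq_sum, ← Finset.add_sum_erase _ _ hn]

/-- If `(m_1,…,m_{n-1})` is realizable on `ℕ₀` and `L_P(m) = 0` for some
`P ∈ 𝒫_{n-i}`, `i ∈ {1,2}`, then `(m_1,…,m_n)` is realizable iff
`L_{x^i P}(m) = 0`, and this condition uniquely determines `m_n`. -/
theorem realizable_iff_xiP_vanishes (n : ℕ) (hn : 2 ≤ n) (m : ℕ → ℝ)
    (hm0 : m 0 = 1) (hreal : RealizableN0 (n - 1) m)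
    (i : ℕ) (hi : i = 1 ∨ i = 2) (P : Polynomial ℝ) (hP : PolyP (n - i) P)
    (hLP : Lf P m = 0) :
    (RealizableN0 n m ↔ Lf (X ^ i * P) m = 0) ∧
      ∃! v : ℝ, Lf (X ^ i * P) (Function.update m n v) = 0 := by
  obtain ⟨hPm, hPd, ⟨S, hScard, hSP⟩, hPnn⟩ := hP
  obtain ⟨μ, hμ0, hμ⟩ := hreal
  have hdP : P.natDegree ≤ n - 1 := by rcases hi with h | h <;> omega
  set Q := X ^ i * P with hQdef
  have hQm : Q.Monic := (monic_X_pow i).mul hPm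
  have hQd : Q.natDegree = n := by
    rw [hQdef, natDegree_mul (pow_ne_zero i X_ne_zero) hPm.ne_zero, natDegree_X_pow, hPd]
    rcases hi with h | h <;> omega
  -- roots of P are exactly S
  have hroot : ∀ x : ℕ, x ∈ S → P.eval (x : ℝ) = 0 := fun x hx => by
    rw [hSP, eval_prod]
    exact Finset.prod_eq_zero hx (by simp)
  have hroot' : ∀ x : ℕ, P.eval (x : ℝ) = 0 → x ∈ S := fun x hx => by
    rw [hSP, eval_prod, Finset.prod_eq_zero_iff] at hx
    obtain ⟨a, ha, h0⟩ := hx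
    simp only [eval_sub, eval_X, eval_C, sub_eq_zero, Nat.cast_inj] at h0
    exact h0 ▸ ha
  -- μ is supported on S
  have hPμ : HasSum (fun x : ℕ => P.eval (x : ℝ) * μ x) 0 := by
    have := hasSum_eval P (n - 1) hdP μ m hμ
    rwa [hLP] at this
  have hterm : ∀ x : ℕ, P.eval (x : ℝ) * μ x = 0 := by
    rw [hasSum_zero_iff_of_nonneg (fun x => mul_nonneg (hPnn x) (hμ0 x))] at hPμ
    exact fun x => congrFun hPμ x
  have hsupp : ∀ x : ℕ, x ∉ S → μ x = 0 := fun x hx => by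
    rcases mul_eq_zero.mp (hterm x) with h | h
    · exact absurd (hroot' x h) hx
    · exact h
  -- all moments of μ exist, as finite sums over S
  set M : ℕ → ℝ := fun k => ∑ x ∈ S, (x : ℝ) ^ k * μ x with hMdef
  have hM : ∀ k, HasSum (fun x : ℕ => (x : ℝ) ^ k * μ x) (M k) := fun k =>
    hasSum_sum_of_ne_finset_zero fun x hx => by rw [hsupp x hx, mul_zero]
  have hMm : ∀ k, k ≤ n - 1 → M k = m k := fun k hk => (hM k).unique (hμ k hk)
  have hLQM : Lf Q M = 0 := by
    have h1 : HasSum (fun x : ℕ => Q.eval (x : ℝ) * μ x) (Lf Q M) :=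
      hasSum_eval Q n hQd.le μ M fun k _ => hM k
    have h2 : ∀ x : ℕ, Q.eval (x : ℝ) * μ x = 0 := fun x => by
      rw [hQdef, eval_mul, eval_pow, eval_X, mul_assoc, hterm x, mul_zero]
    exact h1.unique (by rw [funext h2]; exact hasSum_zero)
  have hnsupp : n ∈ Q.support := by
    rw [Polynomial.mem_support_iff, ← hQd, hQm.coeff_natDegree]
    exact one_ne_zero
  have hcoeffn : Q.coeff n = 1 := by rw [← hQd]; exact hQm.coeff_natDegree
  have hT : ∑ k ∈ Q.support.erase n, Q.coeff k * m k
      = ∑ k ∈ Q.support.erase n, Q.coeff k * M k := by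
    refine Finset.sum_congr rfl fun k hk => ?_
    obtain ⟨hkn, hks⟩ := Finset.mem_erase.mp hk
    have hkle : k ≤ n - 1 := by
      have := Polynomial.le_natDegree_of_mem_supp k hks
      omega
    rw [hMm k hkle]
  have e2 := Lf_split Q M n hnsupp
  rw [hcoeffn, one_mul] at e2
  have hkey : Lf Q m = m n - M n := by
    have e1 := Lf_split Q m n hnsupp
    rw [hcoeffn, one_mul] at e1
    rw [e1, hT]
    linarith [hLQM, e2]
  constructor
  · constructor
    · rintro ⟨ν, hν0, hν⟩
      have hPν : HasSum (fun x : ℕ => P.eval (x : ℝ) * ν x) 0 := by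
        have := hasSum_eval P n (by omega) ν m hν
        rwa [hLP] at this
      have htermν : ∀ x : ℕ, P.eval (x : ℝ) * ν x = 0 := by
        rw [hasSum_zero_iff_of_nonneg (fun x => mul_nonneg (hPnn x) (hν0 x))] at hPν
        exact fun x => congrFun hPν x
      have h1 : HasSum (fun x : ℕ => Q.eval (x : ℝ) * ν x) (Lf Q m) :=
        hasSum_eval Q n hQd.le ν m hν
      have h2 : ∀ x : ℕ, Q.eval (x : ℝ) * ν x = 0 := fun x => by
        rw [hQdef, eval_mul, eval_pow, eval_X, mul_assoc, htermν x, mul_zero]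
      exact h1.unique (by rw [funext h2]; exact hasSum_zero)
    · intro h0
      refine ⟨μ, hμ0, fun k hk => ?_⟩
      rcases lt_or_eq_of_le hk with h | h
      · exact hμ k (by omega)
      · subst h
        have hmn : m k = M k := by linarith [hkey, h0]
        rw [hmn]
        exact hM k
  · have hupdate : ∀ v : ℝ, Lf Q (Function.update m n v)
        = v + ∑ k ∈ Q.support.erase n, Q.coeff k * m k := by
      intro v
      rw [Lf_split Q _ n hnsupp, hcoeffn, one_mul, Function.update_self]
      congr 1
      refine Finset.sum_congr rfl fun k hk => ?_
      rw [Function.update_of_ne (Finset.mem_erase.mp hk).1]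
    refine ⟨-(∑ k ∈ Q.support.erase n, Q.coeff k * m k), ?_, fun v hv => ?_⟩
    · show Lf Q (Function.update m n _) = 0
      rw [hupdate]; ring
    · have hv' : Lf Q (Function.update m n v) = 0 := hv
      rw [hupdate] at hv'; linarith
end

section
/- Let n ≥ 2 and m = (m_1,…,m_n) ∈ ℝ^n with m_0 := 1, and suppose (m_1,…,m_{n−1}) is I-realizable on ℕ₀. Then there exists a polynomial P* ∈ 𝒫_n with L_{P*}(m) ≤ L_P(m) for all P ∈ 𝒫_n, and (m_1,…,m_n) is realizable on ℕ₀ if and only if L_{P*}(m) ≥ 0; moreover (m_1,…,m_n) is I-realizable if L_{P*}(m) > 0 and B-realizable if L_{P*}(m) = 0. -/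
open Polynomial

open Finset



lemma Lf_range {P : Polynomial ℝ} {m : ℕ → ℝ} {N : ℕ} (h : P.natDegree < N) :
    Lf P m = ∑ k ∈ range N, P.coeff k * m k :=
  Polynomial.sum_over_range' P (by simp) N h

lemma Lf_add (P Q : Polynomial ℝ) (m : ℕ → ℝ) : Lf (P + Q) m = Lf P m + Lf Q m := by
  have h := Polynomial.natDegree_add_le P Q
  set N := max P.natDegree Q.natDegree + 1
  rw [Lf_range (m := m) (N := N) (by omega),
      Lf_range (m := m) (N := N) (by omega), Lf_range (m := m) (N := N) (by omega),
      ← Finset.sum_add_distrib]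
  exact Finset.sum_congr rfl fun k _ => by rw [coeff_add]; ring

lemma Lf_Cmul (c : ℝ) (P : Polynomial ℝ) (m : ℕ → ℝ) : Lf (C c * P) m = c * Lf P m := by
  have h := Polynomial.natDegree_mul_le (p := C c) (q := P)
  set N := P.natDegree + 1
  rw [Lf_range (m := m) (N := N) (lt_of_le_of_lt h (by simp [N])), Lf_range (m := m) (N := N) (by omega),
      Finset.mul_sum]
  exact Finset.sum_congr rfl fun k _ => by rw [coeff_C_mul]; ring

lemma Lf_sub (P Q : Polynomial ℝ) (m : ℕ → ℝ) : Lf (P - Q) m = Lf P m - Lf Q m := by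
  have : Lf (P - Q) m + Lf Q m = Lf P m := by rw [← Lf_add, sub_add_cancel]
  linarith

lemma Lf_X_pow (k : ℕ) (m : ℕ → ℝ) : Lf (X ^ k) m = m k := by
  rw [Lf_range (m := m) (N := k + 1) (by simp [natDegree_X_pow])]
  rw [Finset.sum_eq_single k (fun b _ hb => by simp [coeff_X_pow, hb]) (by simp)]
  simp [coeff_X_pow]

lemma Lf_sum {ι : Type*} (s : Finset ι) (f : ι → Polynomial ℝ) (m : ℕ → ℝ) :
    Lf (∑ i ∈ s, f i) m = ∑ i ∈ s, Lf (f i) m := by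
  classical
  induction s using Finset.induction with
  | empty => simp [Lf]
  | insert _ _ h ih => rw [Finset.sum_insert h, Lf_add, ih, Finset.sum_insert h]

lemma hasSum_eval_s8 {m : ℕ → ℝ} {μ : ℕ → ℝ} {j : ℕ}
    (hμ : ∀ k, k ≤ j → HasSum (fun x : ℕ => (x : ℝ) ^ k * μ x) (m k))
    {P : Polynomial ℝ} (hdeg : P.natDegree ≤ j) :
    HasSum (fun x : ℕ => P.eval (x : ℝ) * μ x) (Lf P m) := by
  have heval : ∀ x : ℕ, P.eval (x : ℝ) * μ x
      = ∑ k ∈ range (j + 1), P.coeff k * ((x : ℝ) ^ k * μ x) := by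
    intro x
    rw [Polynomial.eval_eq_sum_range' (Nat.lt_succ_of_le hdeg), Finset.sum_mul]
    exact Finset.sum_congr rfl fun k _ => by ring
  have h : HasSum (fun x : ℕ => ∑ k ∈ range (j + 1), P.coeff k * ((x : ℝ) ^ k * μ x))
      (∑ k ∈ range (j + 1), P.coeff k * m k) :=
    hasSum_sum fun k hk => (hμ k (by simp at hk; omega)).mul_left _
  rw [Lf_range (Nat.lt_succ_of_le hdeg)]
  exact (funext heval : _) ▸ h



noncomputable def pol (S : Finset ℕ) : Polynomial ℝ := ∏ a ∈ S, (X - C (a : ℝ))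

def cntA (S : Finset ℕ) (x : ℕ) : ℕ := (S.filter (fun a => x < a)).card

def Adm (S : Finset ℕ) : Prop := ∀ x : ℕ, x ∉ S → Even (cntA S x)

lemma pol_monic (S : Finset ℕ) : (pol S).Monic :=
  monic_prod_of_monic _ _ fun a _ => monic_X_sub_C _

lemma pol_natDegree (S : Finset ℕ) : (pol S).natDegree = S.card := by
  rw [pol, natDegree_prod_of_monic _ _ fun a _ => monic_X_sub_C _]
  simp only [natDegree_X_sub_C]
  rw [Finset.sum_const, smul_eq_mul, mul_one]


lemma eval_pol (S : Finset ℕ) (x : ℝ) : (pol S).eval x = ∏ a ∈ S, (x - (a : ℝ)) := by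
  simp [pol, eval_prod]

lemma one_le_abs_cast_sub {y a : ℕ} (h : y ≠ a) : 1 ≤ |(y : ℝ) - (a : ℝ)| := by
  rw [show (y : ℝ) - (a : ℝ) = (((y : ℤ) - (a : ℤ) : ℤ) : ℝ) by push_cast; ring, ← Int.cast_abs]
  have hne : (y : ℤ) - (a : ℤ) ≠ 0 := sub_ne_zero.mpr (by exact_mod_cast h)
  exact_mod_cast Int.one_le_abs hne

lemma prod_cast_sub_ne_zero {S : Finset ℕ} {x : ℕ} (hx : x ∉ S) :
    ∏ a ∈ S, ((x : ℝ) - a) ≠ 0 := by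
  rw [Finset.prod_ne_zero_iff]
  intro a ha
  refine sub_ne_zero.mpr fun hh => hx ?_
  have : x = a := by exact_mod_cast hh
  rwa [this]

/-- Sign of the product `∏ (x - a)` over `S` at a non-member `x`. -/
lemma prod_cast_sub_eq (S : Finset ℕ) (x : ℕ) :
    ∏ a ∈ S, ((x : ℝ) - a) = (-1) ^ (cntA S x) * ∏ a ∈ S, |(x : ℝ) - a| := by
  rw [← Finset.prod_filter_mul_prod_filter_not S (fun a => x < a),
      ← Finset.prod_filter_mul_prod_filter_not S (fun a => x < a) (fun a => |(x:ℝ) - a|)]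
  have h1 : ∏ a ∈ S.filter (fun a => x < a), ((x : ℝ) - a)
      = (-1) ^ (cntA S x) * ∏ a ∈ S.filter (fun a => x < a), |(x : ℝ) - a| := by
    rw [cntA, ← Finset.prod_const (-1 : ℝ), ← Finset.prod_mul_distrib]
    refine Finset.prod_congr rfl fun a ha => ?_
    have hlt : (x : ℝ) < a := by exact_mod_cast (Finset.mem_filter.mp ha).2
    rw [abs_of_neg (by linarith)]; ring
  have h2 : ∏ a ∈ S.filter (fun a => ¬ x < a), ((x : ℝ) - a)
      = ∏ a ∈ S.filter (fun a => ¬ x < a), |(x : ℝ) - a| := by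
    refine Finset.prod_congr rfl fun a ha => ?_
    have hle : (a : ℝ) ≤ x := by exact_mod_cast Nat.le_of_not_lt (Finset.mem_filter.mp ha).2
    rw [abs_of_nonneg (by linarith)]
  rw [h1, h2]; ring

lemma prod_abs_pos {S : Finset ℕ} {x : ℕ} (hx : x ∉ S) :
    0 < ∏ a ∈ S, |(x : ℝ) - a| := by
  refine Finset.prod_pos fun a ha => ?_
  have hne : x ≠ a := fun h => hx (by rwa [h])
  linarith [one_le_abs_cast_sub hne]

lemma prod_abs_one_le {S : Finset ℕ} {x : ℕ} (hx : x ∉ S) :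
    1 ≤ ∏ a ∈ S, |(x : ℝ) - a| := by
  have h1 : (1:ℝ) = ∏ _a ∈ S, (1:ℝ) := by simp
  rw [h1]
  refine Finset.prod_le_prod (fun a _ => zero_le_one) fun a ha => ?_
  refine one_le_abs_cast_sub fun h => hx ?_
  rwa [h]

lemma eval_pol_pos_iff {S : Finset ℕ} {x : ℕ} (hx : x ∉ S) :
    (0 < (pol S).eval (x : ℝ)) ↔ Even (cntA S x) := by
  rw [eval_pol, prod_cast_sub_eq]
  constructor
  · intro h
    by_contra hodd
    rw [Nat.not_even_iff_odd] at hodd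
    rw [hodd.neg_one_pow] at h
    nlinarith [prod_abs_pos hx]
  · intro h
    rw [h.neg_one_pow, one_mul]
    exact prod_abs_pos hx

lemma eval_pol_mem {S : Finset ℕ} {x : ℕ} (hx : x ∈ S) : (pol S).eval (x : ℝ) = 0 := by
  rw [eval_pol]
  exact Finset.prod_eq_zero hx (by simp)

lemma adm_iff_nonneg (S : Finset ℕ) : Adm S ↔ ∀ x : ℕ, 0 ≤ (pol S).eval (x : ℝ) := by
  constructor
  · intro hS x
    by_cases hx : x ∈ S
    · rw [eval_pol_mem hx]
    · exact le_of_lt ((eval_pol_pos_iff hx).mpr (hS x hx))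
  · intro h x hx
    rw [← eval_pol_pos_iff hx]
    rcases lt_or_eq_of_le (h x) with h' | h'
    · exact h'
    · exact absurd h'.symm (by rw [eval_pol]; exact prod_cast_sub_ne_zero hx)

lemma polyP_pol {S : Finset ℕ} {j : ℕ} (hcard : S.card = j) (hadm : Adm S) :
    PolyP j (pol S) :=
  ⟨pol_monic S, by rw [pol_natDegree, hcard], ⟨S, hcard, rfl⟩, (adm_iff_nonneg S).mp hadm⟩

lemma polyP_elim {j : ℕ} {P : Polynomial ℝ} (h : PolyP j P) :
    ∃ S : Finset ℕ, S.card = j ∧ Adm S ∧ P = pol S := by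
  obtain ⟨_, _, ⟨S, hcard, hP⟩, hnn⟩ := h
  refine ⟨S, hcard, (adm_iff_nonneg S).mpr (fun x => ?_), hP⟩
  have := hnn x
  rwa [hP] at this





lemma cntA_insert {S : Finset ℕ} {y : ℕ} (hy : y ∉ S) (x : ℕ) :
    cntA (insert y S) x = cntA S x + if x < y then 1 else 0 := by
  unfold cntA
  rw [Finset.filter_insert]
  split
  · rw [Finset.card_insert_of_notMem (fun h => hy (Finset.mem_of_mem_filter _ h))]
  · rw [Nat.add_zero]

lemma cntA_erase {S : Finset ℕ} {a : ℕ} (ha : a ∈ S) (x : ℕ) :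
    cntA S x = cntA (S.erase a) x + if x < a then 1 else 0 := by
  unfold cntA
  rw [Finset.filter_erase]
  by_cases h : x < a
  · rw [if_pos h, Finset.card_erase_of_mem ((Finset.mem_filter (p := fun a => x < a)).mpr ⟨ha, h⟩)]
    have hpos : 0 < #(filter (fun a => x < a) S) :=
      Finset.card_pos.mpr ⟨a, (Finset.mem_filter (p := fun a => x < a)).mpr ⟨ha, h⟩⟩
    omega
  · rw [if_neg h, Finset.erase_eq_of_notMem (fun hm => h (Finset.mem_filter.mp hm).2), Nat.add_zero]

lemma adm_range (k : ℕ) : Adm (Finset.range k) := by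
  intro x hx
  have : (Finset.range k).filter (fun a => x < a) = ∅ := by
    ext a; simp only [Finset.mem_filter, Finset.mem_range, Finset.notMem_empty, iff_false]
    rintro ⟨h1, h2⟩
    simp only [Finset.mem_range, not_lt] at hx
    omega
  simp [cntA, this]

lemma cntA_zero_of_lt {S : Finset ℕ} {x : ℕ} (h : ∀ a ∈ S, a ≤ x) : cntA S x = 0 := by
  unfold cntA
  rw [Finset.card_eq_zero, Finset.filter_eq_empty_iff]
  intro a ha
  exact Nat.not_lt.mpr (h a ha)

/-- R1: swap a root `a` (with odd count above) for the least non-member above it. -/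
lemma adm_swap_up {S : Finset ℕ} {a y : ℕ} (hS : Adm S) (ha : a ∈ S)
    (hodd : ¬ Even (cntA S a)) (hay : a < y) (hyS : y ∉ S)
    (hfill : ∀ z, a < z → z < y → z ∈ S) :
    Adm (insert y (S.erase a)) := by
  intro x hx
  have hyE : y ∉ S.erase a := fun h => hyS (Finset.mem_of_mem_erase h)
  rw [cntA_insert hyE]
  have hkey := cntA_erase ha x
  simp only [Finset.mem_insert, Finset.mem_erase] at hx
  push_neg at hx
  obtain ⟨hxy, hxa⟩ := hx
  rw [Nat.even_iff] at *
  rcases Nat.lt_trichotomy x a with h | h | h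
  · -- x < a ; x ∉ S
    have hxS : x ∉ S := fun hm => hxa (by omega) hm
    have := hS x hxS; rw [Nat.even_iff] at this
    rw [if_pos (by omega)] at hkey
    rw [if_pos (by omega)]
    omega
  · -- x = a
    rw [if_neg (by omega)] at hkey
    rw [if_pos (by omega)]
    subst h
    omega
  · -- x > a : then x ∉ S would need x ≥ y or x ∈ (a,y) ⊆ S
    have hxS : x ∉ S := fun hm => hxa (by omega) hm
    have hxy' : ¬ (x < y) := by
      intro hlt
      rcases Nat.lt_or_ge x y with h2 | h2
      · exact hxS (hfill x h (by omega))
      · omega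
    have := hS x hxS; rw [Nat.even_iff] at this
    rw [if_neg (by omega)] at hkey
    rw [if_neg hxy']
    omega

/-- R2: swap a root `a` (with even count above) for the greatest non-member below it. -/
lemma adm_swap_down {S : Finset ℕ} {a y : ℕ} (hS : Adm S) (ha : a ∈ S)
    (heven : Even (cntA S a)) (hya : y < a) (hyS : y ∉ S)
    (hfill : ∀ z, y < z → z < a → z ∈ S) :
    Adm (insert y (S.erase a)) := by
  intro x hx
  have hyE : y ∉ S.erase a := fun h => hyS (Finset.mem_of_mem_erase h)
  rw [cntA_insert hyE]
  have hkey := cntA_erase ha x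
  simp only [Finset.mem_insert, Finset.mem_erase] at hx
  push_neg at hx
  obtain ⟨hxy, hxa⟩ := hx
  rw [Nat.even_iff] at *
  rcases Nat.lt_trichotomy x a with h | h | h
  · -- x < a ; subcases vs y
    rcases Nat.lt_trichotomy x y with h2 | h2 | h2
    · have hxS : x ∉ S := fun hm => hxa (by omega) hm
      have := hS x hxS; rw [Nat.even_iff] at this
      rw [if_pos (by omega)] at hkey
      rw [if_pos (by omega)]
      omega
    · exact absurd h2 hxy
    · -- y < x < a : x ∈ S, contradiction with hx
      exact absurd (hfill x h2 h) (fun hm => hxa (by omega) hm)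
  · -- x = a : count unchanged
    rw [if_neg (by omega)] at hkey
    rw [if_neg (by omega)]
    subst h
    omega
  · have hxS : x ∉ S := fun hm => hxa (by omega) hm
    have := hS x hxS; rw [Nat.even_iff] at this
    rw [if_neg (by omega)] at hkey
    rw [if_neg (by omega)]
    omega

/-- R3: erase a root `a` with even count above, all smaller naturals being roots. -/
lemma adm_erase {S : Finset ℕ} {a : ℕ} (hS : Adm S) (ha : a ∈ S)
    (heven : Even (cntA S a)) (hfull : ∀ z, z < a → z ∈ S) :
    Adm (S.erase a) := by
  intro x hx
  have hkey := cntA_erase ha x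
  simp only [Finset.mem_erase] at hx
  push_neg at hx
  rw [Nat.even_iff] at *
  rcases Nat.lt_trichotomy x a with h | h | h
  · exact absurd (hfull x h) (fun hm => hx (by omega) hm)
  · rw [if_neg (by omega)] at hkey
    subst h
    omega
  · have hxS : x ∉ S := fun hm => hx (by omega) hm
    have := hS x hxS; rw [Nat.even_iff] at this
    rw [if_neg (by omega)] at hkey
    omega

/-- Padding an admissible set with an even run of fresh large elements. -/
lemma adm_pad {T : Finset ℕ} {M r : ℕ} (hT : Adm T) (hM : ∀ a ∈ T, a + 2 ≤ M) :
    Adm (T ∪ (Finset.range (2 * r)).image (fun i => M + i)) := by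
  intro x hx
  set U := (Finset.range (2 * r)).image (fun i => M + i) with hU
  have hdisj : Disjoint T U := by
    rw [Finset.disjoint_left]
    intro a haT haU
    simp only [hU, Finset.mem_image, Finset.mem_range] at haU
    obtain ⟨i, _, hi⟩ := haU
    have := hM a haT
    omega
  have hcnt : cntA (T ∪ U) x = cntA T x + cntA U x := by
    unfold cntA
    rw [Finset.filter_union, Finset.card_union_of_disjoint
      (Finset.disjoint_filter_filter hdisj)]
  rw [hcnt]
  simp only [Finset.mem_union] at hx
  push_neg at hx
  obtain ⟨hxT, hxU⟩ := hx
  by_cases hxM : x < M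
  · have h1 : cntA U x = 2 * r := by
      unfold cntA
      rw [Finset.filter_true_of_mem, Finset.card_image_of_injective _ (fun i j h => by omega),
        Finset.card_range]
      intro a haU
      simp only [hU, Finset.mem_image, Finset.mem_range] at haU
      obtain ⟨i, _, hi⟩ := haU
      omega
    have := hT x hxT
    rw [h1]
    rw [Nat.even_iff] at *
    omega
  · have hx2 : M + 2 * r ≤ x := by
      by_contra hc
      exact hxU (by simp only [hU, Finset.mem_image, Finset.mem_range]; exact ⟨x - M, by omega, by omega⟩)
    have h1 : cntA U x = 0 := by
      apply cntA_zero_of_lt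
      intro a haU
      simp only [hU, Finset.mem_image, Finset.mem_range] at haU
      obtain ⟨i, _, hi⟩ := haU
      omega
    have h2 : cntA T x = 0 := cntA_zero_of_lt (fun a haT => by have := hM a haT; omega)
    simp [h1, h2]

/-- In an admissible set with max `b ≥ 1`, `b - 1` is also a member. -/
lemma adm_pred_max {S : Finset ℕ} {b : ℕ} (hS : Adm S) (hb : b ∈ S)
    (hmax : ∀ c ∈ S, c ≤ b) (hb1 : 1 ≤ b) : b - 1 ∈ S := by
  by_contra hc
  have := hS (b - 1) hc
  have hfe : S.filter (fun a => b - 1 < a) = {b} := by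
    ext a
    simp only [Finset.mem_filter, Finset.mem_singleton]
    constructor
    · rintro ⟨haS, hlt⟩
      have := hmax a haS
      omega
    · rintro rfl
      exact ⟨hb, by omega⟩
  rw [cntA, hfe] at this
  simp at this
section Analytic

variable {n : ℕ} {m μ : ℕ → ℝ}

/-- Fact C: strict positivity of `Lf` on admissible polynomials of low degree. -/
lemma factC (hn : 2 ≤ n) (hμ0 : ∀ x, 0 ≤ μ x)
    (hμ : ∀ k, k ≤ n - 1 → HasSum (fun x : ℕ => (x : ℝ) ^ k * μ x) (m k))
    (hpos : ∀ P : Polynomial ℝ, PolyP (n - 1) P ∨ PolyP (n - 1 - 1) P → 0 < Lf P m)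
    {T : Finset ℕ} (hT : Adm T) (hcard : T.card ≤ n - 1) :
    0 < Lf (pol T) m := by
  have hdeg : (pol T).natDegree ≤ n - 1 := by rw [pol_natDegree]; exact hcard
  have hsum : HasSum (fun x : ℕ => (pol T).eval (x : ℝ) * μ x) (Lf (pol T) m) :=
    hasSum_eval_s8 hμ hdeg
  have hnn : ∀ x : ℕ, 0 ≤ (pol T).eval (x : ℝ) * μ x := fun x =>
    mul_nonneg ((adm_iff_nonneg T).mp hT x) (hμ0 x)
  have h0 : 0 ≤ Lf (pol T) m := hasSum_le (fun x => hnn x) hasSum_zero hsum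
  rcases lt_or_eq_of_le h0 with h | h
  · exact h
  exfalso
  -- all terms vanish, so μ is supported in T
  have hterm : ∀ x : ℕ, (pol T).eval (x : ℝ) * μ x = 0 := by
    intro x
    have hle : (pol T).eval (x : ℝ) * μ x ≤ 0 := by
      have := le_hasSum hsum x (fun j _ => hnn j)
      linarith
    linarith [hnn x]
  have hsupp : ∀ x : ℕ, x ∉ T → μ x = 0 := by
    intro x hx
    have hne : (pol T).eval (x : ℝ) ≠ 0 := by
      rw [eval_pol]; exact prod_cast_sub_ne_zero hx
    have := hterm x
    rcases mul_eq_zero.mp this with h' | h'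
    · exact absurd h' hne
    · exact h'
  -- pad T to an admissible set of cardinality n-1 or n-2
  set j := T.card with hj
  obtain ⟨r, hr⟩ : ∃ r, j + 2 * r = n - 1 ∨ j + 2 * r = n - 1 - 1 := by
    rcases Nat.even_or_odd (n - 1 - j) with he | ho
    · obtain ⟨k, hk⟩ := he; exact ⟨k, Or.inl (by omega)⟩
    · obtain ⟨k, hk⟩ := ho
      exact ⟨k, Or.inr (by omega)⟩
  set M := (T.sup id) + 2 with hM
  have hMa : ∀ a ∈ T, a + 2 ≤ M := fun a ha => by
    have : a ≤ T.sup id := Finset.le_sup (f := id) ha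
    omega
  set T' := T ∪ (Finset.range (2 * r)).image (fun i => M + i) with hT'
  have hadm' : Adm T' := adm_pad hT hMa
  have hdisj : Disjoint T ((Finset.range (2 * r)).image (fun i => M + i)) := by
    rw [Finset.disjoint_left]
    intro a haT haU
    simp only [Finset.mem_image, Finset.mem_range] at haU
    obtain ⟨i, _, hi⟩ := haU
    have := hMa a haT
    omega
  have hcard' : T'.card = j + 2 * r := by
    rw [hT', Finset.card_union_of_disjoint hdisj,
      Finset.card_image_of_injective _ (fun i j h => by omega), Finset.card_range]
  have hP' : PolyP (n - 1) (pol T') ∨ PolyP (n - 1 - 1) (pol T') := by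
    rcases hr with h' | h'
    · exact Or.inl (polyP_pol (by omega) hadm')
    · exact Or.inr (polyP_pol (by omega) hadm')
  have hzero : Lf (pol T') m = 0 := by
    have hdeg' : (pol T').natDegree ≤ n - 1 := by
      rw [pol_natDegree]; omega
    have hsum' : HasSum (fun x : ℕ => (pol T').eval (x : ℝ) * μ x) (Lf (pol T') m) :=
      hasSum_eval_s8 hμ hdeg'
    have hzf : ∀ x : ℕ, (pol T').eval (x : ℝ) * μ x = 0 := by
      intro x
      by_cases hx : x ∈ T
      · rw [eval_pol_mem (Finset.mem_union_left _ hx), zero_mul]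
      · rw [hsupp x hx, mul_zero]
    have : HasSum (fun x : ℕ => (pol T').eval (x : ℝ) * μ x) 0 := by
      rw [show (fun x : ℕ => (pol T').eval (x : ℝ) * μ x) = fun _ => 0 from funext hzf]
      exact hasSum_zero
    exact hsum'.unique this
  have := hpos (pol T') hP'
  rw [hzero] at this
  exact lt_irrefl 0 this

end Analytic
section Minimizer

variable {n : ℕ} {m μ : ℕ → ℝ}

lemma deg_sub_le {S : Finset ℕ} (hcard : S.card = n) (hn : 1 ≤ n) :
    (pol S - X ^ n).natDegree ≤ n - 1 := by
  by_cases h0 : pol S - X ^ n = 0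
  · rw [h0, natDegree_zero]; omega
  have hdeg : (pol S).degree = (X ^ n : Polynomial ℝ).degree := by
    rw [degree_X_pow, degree_eq_natDegree (pol_monic S).ne_zero, pol_natDegree, hcard]
  have hlt : (pol S - X ^ n).degree < (pol S).degree :=
    degree_sub_lt hdeg (pol_monic S).ne_zero (by
      rw [(pol_monic S).leadingCoeff, leadingCoeff_X_pow])
  have hdn : (pol S).degree = (n : WithBot ℕ) := by
    rw [degree_eq_natDegree (pol_monic S).ne_zero, pol_natDegree, hcard]
  have : (pol S - X ^ n).natDegree < n :=
    (natDegree_lt_iff_degree_lt h0).mpr (by rw [← hdn]; exact hlt)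
  omega

lemma g_eq {S : Finset ℕ} (hcard : S.card = n) :
    Lf (pol S) m = m n + Lf (pol S - X ^ n) m := by
  have : pol S = pol S - X ^ n + X ^ n := by ring
  rw [this, Lf_add, Lf_X_pow]
  ring

lemma minimizer_caseA (hn : 2 ≤ n)
    (hμ : ∀ k, k ≤ n - 1 → HasSum (fun x : ℕ => (x : ℝ) ^ k * μ x) (m k))
    (hμ0 : ∀ x, 0 ≤ μ x)
    {Sc : Finset ℕ} (hSc : Adm Sc) (hScc : Sc.card = n)
    (hsupp : ∀ x, μ x ≠ 0 → x ∈ Sc) :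
    ∀ T, Adm T → T.card = n → Lf (pol Sc) m ≤ Lf (pol T) m := by
  have key : ∀ T : Finset ℕ, T.card = n →
      Lf (pol T - X ^ n) m = ∑ x ∈ Sc, ((pol T).eval (x : ℝ) - (x : ℝ) ^ n) * μ x := by
    intro T hTc
    have hs : HasSum (fun x : ℕ => (pol T - X ^ n).eval (x : ℝ) * μ x) (Lf (pol T - X ^ n) m) :=
      hasSum_eval_s8 hμ (deg_sub_le hTc (by omega))
    have hev : (fun x : ℕ => (pol T - X ^ n).eval (x : ℝ) * μ x)
        = fun x : ℕ => ((pol T).eval (x : ℝ) - (x : ℝ) ^ n) * μ x := by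
      funext x; simp [eval_sub, eval_pow]
    rw [hev] at hs
    have hfin : HasSum (fun x : ℕ => ((pol T).eval (x : ℝ) - (x : ℝ) ^ n) * μ x)
        (∑ x ∈ Sc, ((pol T).eval (x : ℝ) - (x : ℝ) ^ n) * μ x) := by
      apply hasSum_sum_of_ne_finset_zero
      intro x hx
      have : μ x = 0 := by
        by_contra hc
        exact hx (hsupp x hc)
      rw [this, mul_zero]
    exact hs.unique hfin
  intro T hTadm hTc
  rw [g_eq hScc, g_eq hTc, key Sc hScc, key T hTc]
  have hdiff : ∀ x ∈ Sc,
      ((pol Sc).eval (x : ℝ) - (x : ℝ) ^ n) * μ x ≤ ((pol T).eval (x : ℝ) - (x : ℝ) ^ n) * μ x := by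
    intro x hx
    rw [eval_pol_mem hx]
    have h1 : 0 ≤ (pol T).eval (x : ℝ) := (adm_iff_nonneg T).mp hTadm x
    have h2 : 0 ≤ μ x := hμ0 x
    nlinarith
  have := Finset.sum_le_sum hdiff
  linarith

lemma le_abs_cast_pow {y Y k : ℕ} (h : y ≤ Y) : (y : ℝ) ^ k ≤ (Y : ℝ) ^ k :=
  pow_le_pow_left₀ (by positivity) (by exact_mod_cast h) k

set_option maxHeartbeats 2000000 in
/-- Coercivity bound in Case B. -/
lemma coercive_bound (hn : 2 ≤ n) (hμ0 : ∀ x, 0 ≤ μ x)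
    (hμ : ∀ k, k ≤ n - 1 → HasSum (fun x : ℕ => (x : ℝ) ^ k * μ x) (m k))
    {F : Finset ℕ} (hFne : F.Nonempty) (hF : ∀ y ∈ F, 0 < μ y)
    {S : Finset ℕ} (hS : Adm S) (hSc : S.card = n) (hSne : S.Nonempty)
    {y : ℕ} (hy : y ∈ F) (hyS : y ∉ S)
    (hYb : F.max' hFne + 2 ≤ S.max' hSne) :
    m n + (F.inf' hFne μ) * (((S.max' hSne : ℝ) - (F.max' hFne : ℝ) - 1) ^ 2
        - (F.max' hFne : ℝ) ^ n) - (n : ℝ) * (S.max' hSne : ℝ) * m (n - 1)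
      ≤ Lf (pol S) m := by
  set b := S.max' hSne with hbdef
  set Y := F.max' hFne with hYdef
  set μstar := F.inf' hFne μ with hμstar
  have hμstarpos : 0 < μstar := by
    rw [hμstar, Finset.lt_inf'_iff]
    exact fun y hy => hF y hy
  have hbS : b ∈ S := Finset.max'_mem S hSne
  have hble : ∀ c ∈ S, c ≤ b := fun c hc => Finset.le_max' S c hc
  have hb1 : 1 ≤ b := by
    have h2 : 1 < S.card := by omega
    obtain ⟨a, ha, a', ha', hne⟩ := Finset.one_lt_card.mp h2
    rcases Nat.eq_zero_or_pos b with h | h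
    · exfalso
      have := hble a ha
      have := hble a' ha'
      omega
    · exact h
  have hbm1 : b - 1 ∈ S := adm_pred_max hS hbS hble hb1
  -- the auxiliary nonnegative polynomial
  set h : Polynomial ℝ := pol S - X ^ n + C ((n : ℝ) * b) * X ^ (n - 1) with hh
  have hdeg : h.natDegree ≤ n - 1 := by
    refine le_trans (natDegree_add_le _ _) (max_le (deg_sub_le hSc (by omega)) ?_)
    exact le_trans (natDegree_C_mul_le _ _) (by rw [natDegree_X_pow])
  have hLfh : Lf h m = Lf (pol S - X ^ n) m + (n : ℝ) * b * m (n - 1) := by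
    rw [hh, Lf_add, Lf_Cmul, Lf_X_pow]
  have heval : ∀ x : ℕ, h.eval (x : ℝ)
      = (pol S).eval (x : ℝ) - (x : ℝ) ^ n + (n : ℝ) * b * (x : ℝ) ^ (n - 1) := by
    intro x; simp [hh]
  have hnn : ∀ x : ℕ, 0 ≤ h.eval (x : ℝ) := by
    intro x
    rw [heval]
    have hpolnn : 0 ≤ (pol S).eval (x : ℝ) := (adm_iff_nonneg S).mp hS x
    by_cases hx : x ≤ n * b
    · have hxr : (x : ℝ) ≤ (n : ℝ) * b := by exact_mod_cast hx
      have hxn : (x : ℝ) ^ n = (x : ℝ) ^ (n - 1) * (x : ℝ) := by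
        rw [← pow_succ]
        congr 1
        omega
      have hpow : (0:ℝ) ≤ (x:ℝ) ^ (n-1) := by positivity
      nlinarith
    · push_neg at hx
      have hbnx : b ≤ x := by
        have h1 : b ≤ n * b := Nat.le_mul_of_pos_left b (by omega)
        omega
      have hbx : (b : ℝ) ≤ (x : ℝ) := by exact_mod_cast hbnx
      have hstep1 : ((x : ℝ) - b) ^ n ≤ (pol S).eval (x : ℝ) := by
        rw [eval_pol]
        have hppp := Finset.prod_le_prod (s := S) (f := fun _ : ℕ => (x : ℝ) - (b:ℝ))
          (g := fun a : ℕ => (x : ℝ) - (a:ℝ))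
          (fun a _ => by linarith)
          (fun a ha => by
            have : (a : ℝ) ≤ (b:ℝ) := by exact_mod_cast hble a ha
            linarith)
        rw [Finset.prod_const, hSc] at hppp
        exact hppp
      have hstep2 : (x : ℝ) ^ n - ((x : ℝ) - b) ^ n ≤ (n : ℝ) * b * (x : ℝ) ^ (n - 1) := by
        have hid := geom_sum₂_mul (x := (x : ℝ)) (y := (x : ℝ) - (b : ℝ)) (n := n)
        have hbnn : (0:ℝ) ≤ b := by positivity
        have hsum_le : ∑ i ∈ Finset.range n, (x : ℝ) ^ i * ((x : ℝ) - b) ^ (n - 1 - i)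
            ≤ (n : ℝ) * (x : ℝ) ^ (n - 1) := by
          have : ∀ i ∈ Finset.range n, (x : ℝ) ^ i * ((x : ℝ) - b) ^ (n - 1 - i)
              ≤ (x : ℝ) ^ (n - 1) := by
            intro i hi
            have hi' : i ≤ n - 1 := by
              have := Finset.mem_range.mp hi; omega
            have h1 : ((x : ℝ) - b) ^ (n - 1 - i) ≤ (x : ℝ) ^ (n - 1 - i) :=
              pow_le_pow_left₀ (by linarith) (by linarith) _
            have h2 : (0:ℝ) ≤ (x:ℝ) ^ i := by positivity
            calc (x : ℝ) ^ i * ((x : ℝ) - b) ^ (n - 1 - i)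
                ≤ (x : ℝ) ^ i * (x : ℝ) ^ (n - 1 - i) := by nlinarith
              _ = (x : ℝ) ^ (n - 1) := by
                  rw [← pow_add]
                  congr 1
                  omega
          calc ∑ i ∈ Finset.range n, (x : ℝ) ^ i * ((x : ℝ) - b) ^ (n - 1 - i)
              ≤ ∑ _i ∈ Finset.range n, (x : ℝ) ^ (n - 1) := Finset.sum_le_sum this
            _ = (n : ℝ) * (x : ℝ) ^ (n - 1) := by
                rw [Finset.sum_const, Finset.card_range, nsmul_eq_mul]
        have hxb : (x : ℝ) - ((x : ℝ) - b) = b := by ring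
        rw [hxb] at hid
        have hxpow : (0:ℝ) ≤ (x:ℝ) ^ (n-1) := by positivity
        nlinarith
      nlinarith
  have hsumh : HasSum (fun x : ℕ => h.eval (x : ℝ) * μ x) (Lf h m) := hasSum_eval_s8 hμ hdeg
  have hterm : h.eval (y : ℝ) * μ y ≤ Lf h m :=
    le_hasSum hsumh y (fun j _ => mul_nonneg (hnn j) (hμ0 j))
  -- lower bound for `h.eval y`
  have hyY : y ≤ Y := Finset.le_max' F y hy
  have hyYr : (y : ℝ) ≤ (Y : ℝ) := by exact_mod_cast hyY
  have hbYr : (Y : ℝ) + 2 ≤ (b : ℝ) := by exact_mod_cast hYb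
  have hevalpol : ((b : ℝ) - Y - 1) ^ 2 ≤ (pol S).eval (y : ℝ) := by
    have habs : (pol S).eval (y : ℝ) = ∏ a ∈ S, |(y : ℝ) - a| := by
      rw [eval_pol, prod_cast_sub_eq, (hS y hyS).neg_one_pow, one_mul]
    rw [habs]
    have hsub : ({b - 1, b} : Finset ℕ) ⊆ S := by
      intro c hc
      simp only [Finset.mem_insert, Finset.mem_singleton] at hc
      rcases hc with rfl | rfl
      · exact hbm1
      · exact hbS
    have hprodle : ∏ a ∈ ({b - 1, b} : Finset ℕ), |(y : ℝ) - a| ≤ ∏ a ∈ S, |(y : ℝ) - a| := by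
      rw [← Finset.prod_sdiff hsub]
      have h1 : 1 ≤ ∏ a ∈ S \ ({b - 1, b} : Finset ℕ), |(y : ℝ) - a| :=
        prod_abs_one_le (fun hm => hyS (Finset.mem_sdiff.mp hm).1)
      have h2 : 0 ≤ ∏ a ∈ ({b - 1, b} : Finset ℕ), |(y : ℝ) - a| :=
        Finset.prod_nonneg (fun a _ => abs_nonneg _)
      nlinarith
    have hpair : ∏ a ∈ ({b - 1, b} : Finset ℕ), |(y : ℝ) - a| = |(y:ℝ) - (b-1:ℕ)| * |(y:ℝ) - b| := by
      rw [Finset.prod_insert (by simp; omega), Finset.prod_singleton]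
    have hcast : ((b - 1 : ℕ) : ℝ) = (b:ℝ) - 1 := by
      rw [Nat.cast_sub hb1, Nat.cast_one]
    have hc1 : |(y:ℝ) - ((b-1:ℕ):ℝ)| = (b : ℝ) - 1 - y := by
      rw [hcast, abs_of_nonpos (by linarith)]
      ring
    have hc2 : |(y:ℝ) - b| = (b : ℝ) - y := by
      rw [abs_of_nonpos (by linarith)]; ring
    have : ((b : ℝ) - Y - 1) ^ 2 ≤ ((b:ℝ) - 1 - y) * ((b:ℝ) - y) := by nlinarith
    calc ((b : ℝ) - Y - 1) ^ 2 ≤ ((b:ℝ) - 1 - y) * ((b:ℝ) - y) := this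
      _ = ∏ a ∈ ({b - 1, b} : Finset ℕ), |(y : ℝ) - a| := by rw [hpair, hc1, hc2]
      _ ≤ ∏ a ∈ S, |(y : ℝ) - a| := hprodle
  have hevalh : ((b : ℝ) - Y - 1) ^ 2 - (Y : ℝ) ^ n ≤ h.eval (y : ℝ) := by
    rw [heval]
    have h1 : (y : ℝ) ^ n ≤ (Y : ℝ) ^ n := le_abs_cast_pow hyY
    have h2 : (0:ℝ) ≤ (n : ℝ) * b * (y : ℝ) ^ (n - 1) := by positivity
    nlinarith
  have hμy : μstar ≤ μ y := Finset.inf'_le μ hy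
  have hkey : (((b : ℝ) - Y - 1) ^ 2 - (Y : ℝ) ^ n) * μstar ≤ h.eval (y : ℝ) * μ y := by
    rcases le_or_gt (((b : ℝ) - Y - 1) ^ 2 - (Y : ℝ) ^ n) 0 with hc | hc
    · calc (((b : ℝ) - Y - 1) ^ 2 - (Y : ℝ) ^ n) * μstar
          ≤ 0 := mul_nonpos_of_nonpos_of_nonneg hc (le_of_lt hμstarpos)
        _ ≤ h.eval (y : ℝ) * μ y := mul_nonneg (hnn y) (hμ0 y)
    · exact mul_le_mul hevalh hμy (le_of_lt hμstarpos) (hnn y)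
  rw [g_eq hSc]
  have : Lf (pol S - X ^ n) m = Lf h m - (n : ℝ) * b * m (n - 1) := by rw [hLfh]; ring
  rw [this]
  linarith [hterm, hkey]

end Minimizer
section Exists

variable {n : ℕ} {m μ : ℕ → ℝ}

set_option maxHeartbeats 2000000 in
lemma exists_minimizer (hn : 2 ≤ n) (hμ0 : ∀ x, 0 ≤ μ x)
    (hμ : ∀ k, k ≤ n - 1 → HasSum (fun x : ℕ => (x : ℝ) ^ k * μ x) (m k)) :
    ∃ S : Finset ℕ, (Adm S ∧ S.card = n) ∧
      ∀ T, Adm T → T.card = n → Lf (pol S) m ≤ Lf (pol T) m := by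
  classical
  by_cases hA : ∃ Sc : Finset ℕ, Adm Sc ∧ Sc.card = n ∧ ∀ x, μ x ≠ 0 → x ∈ Sc
  · obtain ⟨Sc, h1, h2, h3⟩ := hA
    exact ⟨Sc, ⟨h1, h2⟩, minimizer_caseA hn hμ hμ0 h1 h2 h3⟩
  push_neg at hA
  have hmiss : ∀ S : Finset ℕ, Adm S → S.card = n → ∃ y, μ y ≠ 0 ∧ y ∉ S := by
    intro S h1 h2
    obtain ⟨x, hx⟩ := hA S h1 h2
    exact ⟨x, hx.1, hx.2⟩
  obtain ⟨F, hFsub, hFmiss⟩ :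
      ∃ F : Finset ℕ, (∀ y ∈ F, μ y ≠ 0) ∧
        (∀ S : Finset ℕ, Adm S → S.card = n → ∃ y ∈ F, y ∉ S) := by
    by_cases hfin : (Function.support μ).Finite
    · refine ⟨hfin.toFinset, ?_, ?_⟩
      · intro y hy
        simpa [Function.mem_support] using (Set.Finite.mem_toFinset hfin).mp hy
      · intro S h1 h2
        obtain ⟨y, hy1, hy2⟩ := hmiss S h1 h2
        exact ⟨y, (Set.Finite.mem_toFinset hfin).mpr hy1, hy2⟩
    · obtain ⟨F, hFs, hFcard⟩ :=
        Set.Infinite.exists_subset_card_eq hfin (n + 1)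
      refine ⟨F, fun y hy => hFs hy, ?_⟩
      intro S _ h2
      by_contra hc
      push_neg at hc
      have : F ⊆ S := fun y hy => hc y hy
      have := Finset.card_le_card this
      omega
  have hFne : F.Nonempty := by
    obtain ⟨y, hy, _⟩ := hFmiss (Finset.range n) (adm_range n) (Finset.card_range n)
    exact ⟨y, hy⟩
  have hFpos : ∀ y ∈ F, 0 < μ y := fun y hy => lt_of_le_of_ne (hμ0 y) (Ne.symm (hFsub y hy))
  set Y := F.max' hFne with hYdef
  set μstar := F.inf' hFne μ with hμstar
  have hμstarpos : 0 < μstar := by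
    rw [hμstar, Finset.lt_inf'_iff]
    exact fun y hy => hFpos y hy
  set g0 := Lf (pol (Finset.range n)) m with hg0
  have hm' : 0 ≤ m (n - 1) :=
    hasSum_le (fun x => mul_nonneg (by positivity) (hμ0 x)) hasSum_zero (hμ (n - 1) le_rfl)
  -- choose the threshold B
  obtain ⟨B, hB⟩ := exists_nat_gt ((Y : ℝ) + 2 + (n : ℝ) +
      ((n : ℝ) * m (n - 1) + 1) / μstar +
      (|g0 - m n| + (n : ℝ) * ((Y : ℝ) + 1) * m (n - 1) + μstar * (Y : ℝ) ^ n + 1))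
  have hphi : ∀ b : ℕ, (B : ℝ) ≤ (b : ℝ) →
      g0 < m n + μstar * (((b : ℝ) - (Y : ℝ) - 1) ^ 2 - (Y : ℝ) ^ n)
        - (n : ℝ) * (b : ℝ) * m (n - 1) := by
    intro b hb
    set u : ℝ := (b : ℝ) - Y - 1 with hu
    have hcast : (0:ℝ) ≤ (n : ℝ) * m (n-1) := by positivity
    have hu1 : ((n : ℝ) * m (n - 1) + 1) / μstar ≤ u := by
      have : ((n : ℝ) * m (n - 1) + 1) / μstar ≤ (B:ℝ) - Y - 1 - 1 := by
        have h2 : (0:ℝ) ≤ |g0 - m n| + (n : ℝ) * ((Y : ℝ) + 1) * m (n - 1)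
            + μstar * (Y : ℝ) ^ n := by positivity
        have h3 : (0:ℝ) ≤ (n:ℝ) := by positivity
        linarith
      linarith
    have hu1' : (n : ℝ) * m (n - 1) + 1 ≤ μstar * u := by
      rw [div_le_iff₀ hμstarpos] at hu1
      linarith
    have hu2 : |g0 - m n| + (n : ℝ) * ((Y : ℝ) + 1) * m (n - 1) + μstar * (Y : ℝ) ^ n + 1 ≤ u := by
      have h3 : (0:ℝ) ≤ (n:ℝ) := by positivity
      have h4 : (0:ℝ) ≤ ((n : ℝ) * m (n - 1) + 1) / μstar := by positivity
      linarith
    have hu0 : 1 ≤ u := by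
      have := abs_nonneg (g0 - m n)
      have h5 : (0:ℝ) ≤ (n : ℝ) * ((Y : ℝ) + 1) * m (n - 1) := by positivity
      have h6 : (0:ℝ) ≤ μstar * (Y : ℝ) ^ n := by positivity
      linarith
    have hprod : u * ((n : ℝ) * m (n - 1) + 1) ≤ u * (μstar * u) :=
      mul_le_mul_of_nonneg_left hu1' (by linarith)
    have habs : g0 - m n ≤ |g0 - m n| := le_abs_self _
    have hbu : (n : ℝ) * (b : ℝ) * m (n - 1)
        = (n : ℝ) * m (n - 1) * u + (n : ℝ) * ((Y:ℝ) + 1) * m (n - 1) := by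
      rw [hu]; ring
    nlinarith
  -- minimize over the finite set of candidates below the threshold
  set 𝒜 : Finset (Finset ℕ) :=
    (Finset.range (B + n + 1)).powerset.filter (fun S => Adm S ∧ S.card = n) with h𝒜
  have hmem𝒜 : ∀ S, S ∈ 𝒜 ↔ (S ⊆ Finset.range (B + n + 1) ∧ Adm S ∧ S.card = n) := by
    intro S
    rw [h𝒜, Finset.mem_filter, Finset.mem_powerset]
  have h𝒜ne : (Finset.range n) ∈ 𝒜 := by
    rw [hmem𝒜]
    exact ⟨Finset.range_subset_range.mpr (by omega), adm_range n, Finset.card_range n⟩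
  obtain ⟨S, hS𝒜, hSmin⟩ := Finset.exists_min_image 𝒜 (fun S => Lf (pol S) m) ⟨_, h𝒜ne⟩
  rw [hmem𝒜] at hS𝒜
  refine ⟨S, ⟨hS𝒜.2.1, hS𝒜.2.2⟩, ?_⟩
  intro T hTadm hTcard
  by_cases hTB : T ⊆ Finset.range (B + n + 1)
  · exact hSmin T ((hmem𝒜 T).mpr ⟨hTB, hTadm, hTcard⟩)
  · -- T has a large element: coercivity applies
    have hTne : T.Nonempty := Finset.card_pos.mp (by omega)
    have hbig : B ≤ T.max' hTne := by
      by_contra hc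
      push_neg at hc
      exact hTB (fun t ht => Finset.mem_range.mpr (by
        have := Finset.le_max' T t ht
        omega))
    obtain ⟨y, hyF, hyT⟩ := hFmiss T hTadm hTcard
    have hYb : Y + 2 ≤ T.max' hTne := by
      have hYB : (Y : ℝ) + 2 ≤ (B : ℝ) := by
        have h2 : (0:ℝ) ≤ ((n : ℝ) * m (n - 1) + 1) / μstar := by positivity
        have h3 : (0:ℝ) ≤ |g0 - m n| + (n : ℝ) * ((Y : ℝ) + 1) * m (n - 1)
            + μstar * (Y : ℝ) ^ n + 1 := by positivity
        have h4 : (0:ℝ) ≤ (n:ℝ) := by positivity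
        linarith
      exact_mod_cast le_trans (by exact_mod_cast hYB) (by exact_mod_cast hbig)
    have hco := coercive_bound hn hμ0 hμ hFne hFpos hTadm hTcard hTne hyF hyT hYb
    have hphiT := hphi (T.max' hTne) (by exact_mod_cast hbig)
    have hg0S : Lf (pol S) m ≤ g0 := hSmin _ h𝒜ne
    rw [← hYdef, ← hμstar] at hco
    linarith

end Exists
section Weights

variable {n : ℕ} {m μ : ℕ → ℝ}

lemma swap_identity {s : Finset ℕ} {a : ℕ} (ha : a ∈ s) (y : ℕ) (hy : y ∉ s.erase a) :
    Lf (pol (insert y (s.erase a))) m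
      = Lf (pol s) m + ((a : ℝ) - (y : ℝ)) * Lf (pol (s.erase a)) m := by
  have h1 : pol (insert y (s.erase a)) = (X - C (y:ℝ)) * pol (s.erase a) :=
    Finset.prod_insert hy
  have h2 : pol s = (X - C (a:ℝ)) * pol (s.erase a) :=
    (Finset.mul_prod_erase s _ ha).symm
  have h3 : pol (insert y (s.erase a))
      = pol s + C ((a:ℝ) - (y:ℝ)) * pol (s.erase a) := by
    rw [h1, h2, map_sub]
    ring
  rw [h3, Lf_add, Lf_Cmul]

lemma card_swap {s : Finset ℕ} {a : ℕ} (ha : a ∈ s) {y : ℕ} (hy : y ∉ s.erase a)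
    (hya : y ≠ a) (hcard : s.card = n) (hn : 1 ≤ n) :
    (insert y (s.erase a)).card = n := by
  rw [Finset.card_insert_of_notMem hy, Finset.card_erase_of_mem ha, hcard]
  omega

lemma weights_sign (hn : 2 ≤ n) (hμ0 : ∀ x, 0 ≤ μ x)
    (hμ : ∀ k, k ≤ n - 1 → HasSum (fun x : ℕ => (x : ℝ) ^ k * μ x) (m k))
    (hpos : ∀ P : Polynomial ℝ, PolyP (n - 1) P ∨ PolyP (n - 1 - 1) P → 0 < Lf P m)
    {s : Finset ℕ} (hadm : Adm s) (hcard : s.card = n)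
    (hminim : ∀ T, Adm T → T.card = n → Lf (pol s) m ≤ Lf (pol T) m)
    (hsmin : ∀ T, Adm T → T.card = n → Lf (pol T) m = Lf (pol s) m →
      ∑ c ∈ s, c ≤ ∑ c ∈ T, c) :
    ∀ a ∈ s, (Even (cntA s a) → 0 < Lf (pol (s.erase a)) m) ∧
      (¬ Even (cntA s a) → Lf (pol (s.erase a)) m ≤ 0) := by
  intro a ha
  constructor
  · intro hEven
    by_cases hfull : ∀ z, z < a → z ∈ s
    · -- erase is admissible; use strict positivity
      exact factC hn hμ0 hμ hpos (adm_erase hadm ha hEven hfull)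
        (by rw [Finset.card_erase_of_mem ha, hcard])
    · push_neg at hfull
      obtain ⟨z, hza, hzs⟩ := hfull
      set y := Nat.findGreatest (fun z => z ∉ s) a with hy
      have hyns : y ∉ s :=
        Nat.findGreatest_spec (P := fun z => z ∉ s) (le_of_lt hza) hzs
      have hyle : y ≤ a := Nat.findGreatest_le a
      have hya : y ≠ a := fun h => hyns (h ▸ ha)
      have hylt : y < a := lt_of_le_of_ne hyle hya
      have hfill : ∀ w, y < w → w < a → w ∈ s := by
        intro w hw1 hw2
        by_contra hc
        have := Nat.le_findGreatest (P := fun z => z ∉ s) (le_of_lt hw2) hc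
        omega
      have hadm' : Adm (insert y (s.erase a)) := adm_swap_down hadm ha hEven hylt hyns hfill
      have hyE : y ∉ s.erase a := fun h => hyns (Finset.mem_of_mem_erase h)
      have hcard' := card_swap ha hyE hya hcard (by omega)
      have hle := hminim _ hadm' hcard'
      rw [swap_identity ha y hyE] at hle
      have hay : (0:ℝ) < (a : ℝ) - y := by
        have : (y:ℝ) < (a:ℝ) := by exact_mod_cast hylt
        linarith
      have hQnn : 0 ≤ Lf (pol (s.erase a)) m := by
        by_contra hc
        push_neg at hc
        nlinarith
      rcases lt_or_eq_of_le hQnn with h | h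
      · exact h
      · exfalso
        have heq : Lf (pol (insert y (s.erase a))) m = Lf (pol s) m := by
          rw [swap_identity ha y hyE, ← h]
          ring
        have hsum := hsmin _ hadm' hcard' heq
        rw [Finset.sum_insert hyE] at hsum
        have := Finset.sum_erase_add s id ha
        simp only [id] at this
        omega
  · intro hOdd
    have hex : ∃ z, a < z ∧ z ∉ s := by
      refine ⟨s.sup id + 1, ?_, ?_⟩
      · have : a ≤ s.sup id := Finset.le_sup (f := id) ha
        omega
      · intro hc
        have : s.sup id + 1 ≤ s.sup id := Finset.le_sup (f := id) hc
        omega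
    set y := Nat.find hex with hy
    obtain ⟨hay, hyns⟩ : a < y ∧ y ∉ s := Nat.find_spec hex
    have hfill : ∀ w, a < w → w < y → w ∈ s := by
      intro w hw1 hw2
      by_contra hc
      exact Nat.find_min hex hw2 ⟨hw1, hc⟩
    have hadm' : Adm (insert y (s.erase a)) := adm_swap_up hadm ha hOdd hay hyns hfill
    have hyE : y ∉ s.erase a := fun h => hyns (Finset.mem_of_mem_erase h)
    have hcard' := card_swap ha hyE (by omega) hcard (by omega)
    have hle := hminim _ hadm' hcard'
    rw [swap_identity ha y hyE] at hle
    have hay' : (a : ℝ) - y < 0 := by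
      have : (a:ℝ) < (y:ℝ) := by exact_mod_cast hay
      linarith
    by_contra hc
    push_neg at hc
    nlinarith

end Weights
section Construct

variable {n : ℕ} {m μ : ℕ → ℝ}

set_option maxHeartbeats 2000000 in
lemma realize_of_nonneg (hn : 2 ≤ n) (hμ0 : ∀ x, 0 ≤ μ x)
    (hμ : ∀ k, k ≤ n - 1 → HasSum (fun x : ℕ => (x : ℝ) ^ k * μ x) (m k))
    (hpos : ∀ P : Polynomial ℝ, PolyP (n - 1) P ∨ PolyP (n - 1 - 1) P → 0 < Lf P m)
    {s : Finset ℕ} (hadm : Adm s) (hcard : s.card = n)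
    (hminim : ∀ T, Adm T → T.card = n → Lf (pol s) m ≤ Lf (pol T) m)
    (hsmin : ∀ T, Adm T → T.card = n → Lf (pol T) m = Lf (pol s) m →
      ∑ c ∈ s, c ≤ ∑ c ∈ T, c)
    (hL : 0 ≤ Lf (pol s) m) :
    RealizableN0 n m := by
  classical
  set L := Lf (pol s) m with hLdef
  set v : ℕ → ℝ := fun a => (a : ℝ) with hv
  have hinj : Set.InjOn v ↑s := fun a _ b _ h => Nat.cast_injective h
  have hsign := weights_sign hn hμ0 hμ hpos hadm hcard hminim hsmin
  set D : ℕ → ℝ := fun a => ∏ b ∈ s.erase a, ((a : ℝ) - (b : ℝ)) with hD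
  have hane : ∀ a, a ∉ s.erase a := fun a => Finset.notMem_erase a s
  have hDne : ∀ a, D a ≠ 0 := fun a => prod_cast_sub_ne_zero (hane a)
  have hcnt : ∀ a ∈ s, cntA (s.erase a) a = cntA s a := by
    intro a ha
    have := cntA_erase ha a
    simp only [lt_irrefl, if_false] at this
    omega
  have hDsign : ∀ a ∈ s, (0 < D a ↔ Even (cntA s a)) := by
    intro a ha
    have hDa : D a = ∏ b ∈ s.erase a, ((a : ℝ) - b) := rfl
    rw [hDa]
    have h1 : ∏ b ∈ s.erase a, ((a : ℝ) - b)
        = (-1) ^ (cntA (s.erase a) a) * ∏ b ∈ s.erase a, |(a : ℝ) - b| :=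
      prod_cast_sub_eq (s.erase a) a
    rw [h1, hcnt a ha]
    constructor
    · intro h
      by_contra hodd
      rw [Nat.not_even_iff_odd] at hodd
      rw [hodd.neg_one_pow] at h
      nlinarith [prod_abs_pos (hane a)]
    · intro h
      rw [h.neg_one_pow, one_mul]
      exact prod_abs_pos (hane a)
  -- basis identity
  have hbasis : ∀ a ∈ s, Lagrange.basis s v a = C (D a)⁻¹ * pol (s.erase a) := by
    intro a ha
    rw [Lagrange.basis]
    have h1 : ∀ b ∈ s.erase a, Lagrange.basisDivisor (v a) (v b)
        = C (((a:ℝ) - (b:ℝ))⁻¹) * (X - C ((b:ℕ):ℝ)) := by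
      intro b _
      rw [Lagrange.basisDivisor]
    rw [Finset.prod_congr rfl h1, Finset.prod_mul_distrib, ← map_prod,
      ← Finset.prod_inv_distrib]
    rfl
  set w : ℕ → ℝ := fun a => Lf (Lagrange.basis s v a) m with hw
  have hw_eq : ∀ a ∈ s, w a = (D a)⁻¹ * Lf (pol (s.erase a)) m := by
    intro a ha
    rw [hw]
    simp only
    rw [hbasis a ha, Lf_Cmul]
  have hw_nonneg : ∀ a ∈ s, 0 ≤ w a := by
    intro a ha
    rw [hw_eq a ha]
    by_cases he : Even (cntA s a)
    · have h1 : 0 < D a := (hDsign a ha).mpr he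
      have h2 := (hsign a ha).1 he
      positivity
    · have h1 : ¬ (0 < D a) := fun hc => he ((hDsign a ha).mp hc)
      push_neg at h1
      have h1' : D a < 0 := lt_of_le_of_ne h1 (hDne a)
      have h2 := (hsign a ha).2 he
      have h3 : (D a)⁻¹ < 0 := inv_neg''.mpr h1'
      exact mul_nonneg_iff.mpr (Or.inr ⟨le_of_lt h3, h2⟩)
  have hw_pos : ∀ a ∈ s, Even (cntA s a) → 0 < w a := by
    intro a ha he
    rw [hw_eq a ha]
    have h1 : 0 < D a := (hDsign a ha).mpr he
    have h2 := (hsign a ha).1 he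
    positivity
  -- moment identities
  have hns : s.Nonempty := Finset.card_pos.mp (by omega)
  have keyA : ∀ k : ℕ, ∑ a ∈ s, (a : ℝ) ^ k * w a
      = Lf (Lagrange.interpolate s v (fun a => (a : ℝ) ^ k)) m := by
    intro k
    rw [Lagrange.interpolate_apply, Lf_sum]
    refine Finset.sum_congr rfl fun a _ => ?_
    rw [Lf_Cmul]
  have hdegpow : ∀ k, k < n → (X ^ k : Polynomial ℝ).degree < (s.card : ℕ) := by
    intro k hk
    rw [degree_X_pow, hcard]
    exact_mod_cast hk
  have interp_low : ∀ k, k < n →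
      Lagrange.interpolate s v (fun a => (a : ℝ) ^ k) = X ^ k := by
    intro k hk
    refine (Lagrange.eq_interpolate_of_eval_eq _ hinj (hdegpow k hk) ?_).symm
    intro a _
    simp [hv]
  have hdegtop : (X ^ n - pol s : Polynomial ℝ).degree < (s.card : ℕ) := by
    have h1 : (X ^ n - pol s : Polynomial ℝ) = -(pol s - X ^ n) := by ring
    have h2 : (pol s - X ^ n).natDegree ≤ n - 1 := deg_sub_le hcard (by omega)
    rw [h1]
    calc (-(pol s - X ^ n)).degree = (pol s - X ^ n).degree := degree_neg _
      _ ≤ ((n - 1 : ℕ) : WithBot ℕ) := degree_le_of_natDegree_le h2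
      _ < ((s.card : ℕ) : WithBot ℕ) := by
          rw [hcard]
          exact_mod_cast (by omega : n - 1 < n)
  have interp_top : Lagrange.interpolate s v (fun a => (a : ℝ) ^ n) = X ^ n - pol s := by
    refine (Lagrange.eq_interpolate_of_eval_eq _ hinj hdegtop ?_).symm
    intro a ha
    simp only [eval_sub, eval_pow, eval_X]
    rw [show v a = ((a:ℕ):ℝ) from rfl, eval_pol_mem ha]
    ring
  have hsum_low : ∀ k, k < n → ∑ a ∈ s, (a : ℝ) ^ k * w a = m k := by
    intro k hk
    rw [keyA k, interp_low k hk, Lf_X_pow]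
  have hsum_top : ∑ a ∈ s, (a : ℝ) ^ n * w a = m n - L := by
    rw [keyA n, interp_top, Lf_sub, Lf_X_pow, hLdef]
  -- choice of the far point t
  set E : Finset ℕ := s.filter (fun a => Even (cntA s a)) with hE
  set κ : ℝ := ∑ a ∈ E, L / (D a * w a) with hκ
  have hκ_term : ∀ a ∈ E, 0 ≤ L / (D a * w a) := by
    intro a haE
    rw [hE, Finset.mem_filter] at haE
    obtain ⟨ha, he⟩ := haE
    have h1 : 0 < D a := (hDsign a ha).mpr he
    have h2 := hw_pos a ha he
    positivity
  have hκ0 : 0 ≤ κ := Finset.sum_nonneg hκ_term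
  set b := s.max' hns with hb
  obtain ⟨t, ht⟩ := exists_nat_gt ((b : ℝ) + 1 + κ)
  have htb : ∀ a ∈ s, a < t := by
    intro a ha
    have h1 : (a : ℝ) ≤ (b : ℝ) := by exact_mod_cast Finset.le_max' s a ha
    have : (a : ℝ) < (t : ℝ) := by linarith
    exact_mod_cast this
  have htns : t ∉ s := fun h => lt_irrefl t (htb t h)
  have hPt : 0 < (pol s).eval (t : ℝ) := by
    rw [eval_pol]
    refine Finset.prod_pos fun a ha => ?_
    have : (a : ℝ) < (t : ℝ) := by exact_mod_cast htb a ha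
    linarith
  set c : ℝ := L / (pol s).eval (t : ℝ) with hcdef
  have hc0 : 0 ≤ c := div_nonneg hL (le_of_lt hPt)
  set ℓ : ℕ → ℝ := fun a => (Lagrange.basis s v a).eval (t : ℝ) with hℓ
  have hQt : ∀ a ∈ s, 0 < (pol (s.erase a)).eval (t : ℝ) := by
    intro a _
    rw [eval_pol]
    refine Finset.prod_pos fun x hx => ?_
    have : (x : ℝ) < (t : ℝ) := by exact_mod_cast htb x (Finset.mem_of_mem_erase hx)
    linarith
  have hℓ_eq : ∀ a ∈ s, ℓ a = (D a)⁻¹ * (pol (s.erase a)).eval (t : ℝ) := by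
    intro a ha
    rw [hℓ]
    simp only
    rw [hbasis a ha, eval_mul, eval_C]
  have hta : ∀ a ∈ s, (0:ℝ) < (t : ℝ) - a := by
    intro a ha
    have : (a : ℝ) < (t : ℝ) := by exact_mod_cast htb a ha
    linarith
  have hPtfact : ∀ a ∈ s, (pol s).eval (t : ℝ)
      = ((t : ℝ) - a) * (pol (s.erase a)).eval (t : ℝ) := by
    intro a ha
    have h1 : pol s = (X - C (a:ℝ)) * pol (s.erase a) := (Finset.mul_prod_erase s _ ha).symm
    rw [h1, eval_mul, eval_sub, eval_X, eval_C]
  have hcl : ∀ a ∈ s, c * ℓ a = L / (((t : ℝ) - a) * D a) := by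
    intro a ha
    rw [hcdef, hℓ_eq a ha, hPtfact a ha]
    have h1 := hQt a ha
    have h2 := hta a ha
    have h3 := hDne a
    field_simp
  -- nonnegativity of the corrected weights
  have hcorr : ∀ a ∈ s, 0 ≤ w a - c * ℓ a := by
    intro a ha
    by_cases he : Even (cntA s a)
    · have hDa : 0 < D a := (hDsign a ha).mpr he
      have hwa : 0 < w a := hw_pos a ha he
      have haE : a ∈ E := by rw [hE, Finset.mem_filter]; exact ⟨ha, he⟩
      have h1 : L / (D a * w a) ≤ κ := Finset.single_le_sum hκ_term haE
      have h2 : L / (D a * w a) < (t : ℝ) - a := by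
        have h3 : (a : ℝ) ≤ (b : ℝ) := by exact_mod_cast Finset.le_max' s a ha
        linarith
      have h4 : L < ((t : ℝ) - a) * (D a * w a) := by
        rw [div_lt_iff₀ (by positivity)] at h2
        linarith
      have hpos2 : 0 < ((t : ℝ) - a) * D a := mul_pos (hta a ha) hDa
      have h5 : L / (((t : ℝ) - a) * D a) < w a := by
        rw [div_lt_iff₀ hpos2]
        calc L < ((t : ℝ) - a) * (D a * w a) := h4
          _ = w a * (((t : ℝ) - a) * D a) := by ring
      rw [hcl a ha]
      linarith
    · have h1 : ¬ (0 < D a) := fun hc' => he ((hDsign a ha).mp hc')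
      push_neg at h1
      have h1' : D a < 0 := lt_of_le_of_ne h1 (hDne a)
      have h2 : ℓ a < 0 := by
        rw [hℓ_eq a ha]
        have := hQt a ha
        have h3 : (D a)⁻¹ < 0 := inv_neg''.mpr h1'
        nlinarith
      have h3 : c * ℓ a ≤ 0 := mul_nonpos_of_nonneg_of_nonpos hc0 (le_of_lt h2)
      have := hw_nonneg a ha
      linarith
  -- the realizing measure
  set μ' : ℕ → ℝ := fun x => if x ∈ s then w x - c * ℓ x else if x = t then c else 0 with hμ'
  refine ⟨μ', ?_, ?_⟩
  · intro x
    rw [hμ']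
    simp only
    split
    · next hx => exact hcorr x hx
    · split
      · exact hc0
      · exact le_refl 0
  · intro k hk
    have hzero : ∀ x ∉ insert t s, (x : ℝ) ^ k * μ' x = 0 := by
      intro x hx
      rw [Finset.mem_insert] at hx
      push_neg at hx
      rw [hμ']
      simp only [if_neg hx.2, if_neg hx.1, mul_zero]
    have hsummable := hasSum_sum_of_ne_finset_zero (s := insert t s)
      (f := fun x : ℕ => (x : ℝ) ^ k * μ' x) (L := SummationFilter.unconditional ℕ) hzero
    have hval : ∑ x ∈ insert t s, (x : ℝ) ^ k * μ' x = m k := by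
      rw [Finset.sum_insert htns]
      have hμt : μ' t = c := by rw [hμ']; simp [htns]
      have hsum_in : ∀ x ∈ s, (x:ℝ)^k * μ' x = (x:ℝ)^k * (w x - c * ℓ x) := by
        intro x hx
        rw [hμ']
        simp only [if_pos hx]
      rw [Finset.sum_congr rfl hsum_in, hμt]
      have hsplit : ∑ x ∈ s, (x:ℝ)^k * (w x - c * ℓ x)
          = (∑ x ∈ s, (x:ℝ)^k * w x) - c * ∑ x ∈ s, (x:ℝ)^k * ℓ x := by
        rw [Finset.mul_sum, ← Finset.sum_sub_distrib]
        exact Finset.sum_congr rfl fun x _ => by ring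
      rw [hsplit]
      have hsumℓ : ∑ x ∈ s, (x:ℝ)^k * ℓ x
          = (Lagrange.interpolate s v (fun a => (a : ℝ) ^ k)).eval (t : ℝ) := by
        rw [Lagrange.interpolate_apply, eval_finset_sum]
        refine Finset.sum_congr rfl fun x _ => ?_
        rw [eval_mul, eval_C, hℓ]
      rcases Nat.lt_or_ge k n with hkn | hkn
      · rw [hsum_low k hkn, hsumℓ, interp_low k hkn]
        simp only [eval_pow, eval_X]
        ring
      · have hk' : k = n := by omega
        subst hk'
        rw [hsum_top, hsumℓ, interp_top]
        simp only [eval_sub, eval_pow, eval_X]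
        have hcPt : c * (pol s).eval (t:ℝ) = L := by
          rw [hcdef]
          field_simp
        nlinarith [hcPt]
    rw [← hval]
    exact hsummable

end Construct

/-- If `(m_1,…,m_{n-1})` is I-realizable then a minimizing polynomial
`P* ∈ 𝒫_n` exists and `(m_1,…,m_n)` is realizable iff `L_{P*}(m) ≥ 0`;
it is I-realizable if the inequality is strict and B-realizable if equality holds. -/
theorem realizable_iff_min_poly_nonneg (n : ℕ) (hn : 2 ≤ n) (m : ℕ → ℝ)
    (hm0 : m 0 = 1) (hI : IRealizable (n - 1) m) :
    ∃ Pstar, PolyP n Pstar ∧ (∀ P, PolyP n P → Lf Pstar m ≤ Lf P m) ∧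
      (RealizableN0 n m ↔ 0 ≤ Lf Pstar m) ∧
      (0 < Lf Pstar m → IRealizable n m) ∧
      (Lf Pstar m = 0 → BRealizable n m) := by
  obtain ⟨⟨μ, hμ0, hμ⟩, hpos⟩ := hI
  obtain ⟨S0, ⟨hS0adm, hS0card⟩, hS0min⟩ := exists_minimizer hn hμ0 hμ
  -- choose a minimizer with minimal root sum
  set 𝒦 : Set ℕ := {k | ∃ S : Finset ℕ, (Adm S ∧ S.card = n) ∧
    (∀ T, Adm T → T.card = n → Lf (pol S) m ≤ Lf (pol T) m) ∧ ∑ c ∈ S, c = k} with h𝒦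
  have hne : 𝒦.Nonempty := ⟨∑ c ∈ S0, c, S0, ⟨hS0adm, hS0card⟩, hS0min, rfl⟩
  obtain ⟨s, ⟨hsadm, hscard⟩, hsmin', hsum⟩ := Nat.sInf_mem hne
  have hsmin : ∀ T, Adm T → T.card = n → Lf (pol T) m = Lf (pol s) m →
      ∑ c ∈ s, c ≤ ∑ c ∈ T, c := by
    intro T hT1 hT2 hTeq
    have hTmin : ∀ U, Adm U → U.card = n → Lf (pol T) m ≤ Lf (pol U) m := by
      intro U h1 h2
      rw [hTeq]
      exact hsmin' U h1 h2
    have : (∑ c ∈ T, c) ∈ 𝒦 := ⟨T, ⟨hT1, hT2⟩, hTmin, rfl⟩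
    rw [hsum]
    exact Nat.sInf_le this
  refine ⟨pol s, polyP_pol hscard hsadm, ?_, ?_, ?_, ?_⟩
  · intro P hP
    obtain ⟨T, hTc, hTadm, hPT⟩ := polyP_elim hP
    rw [hPT]
    exact hsmin' T hTadm hTc
  · constructor
    · rintro ⟨μ₂, hμ₂0, hμ₂⟩
      have hs2 : HasSum (fun x : ℕ => (pol s).eval (x : ℝ) * μ₂ x) (Lf (pol s) m) :=
        hasSum_eval_s8 (j := n) hμ₂ (by rw [pol_natDegree, hscard])
      exact hasSum_le
        (fun x => mul_nonneg ((adm_iff_nonneg s).mp hsadm x) (hμ₂0 x)) hasSum_zero hs2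
    · intro hL
      exact realize_of_nonneg hn hμ0 hμ hpos hsadm hscard hsmin' hsmin hL
  · intro hLpos
    refine ⟨realize_of_nonneg hn hμ0 hμ hpos hsadm hscard hsmin' hsmin (le_of_lt hLpos), ?_⟩
    intro P hP
    rcases hP with h | h
    · obtain ⟨T, hTc, hTadm, hPT⟩ := polyP_elim h
      rw [hPT]
      exact lt_of_lt_of_le hLpos (hsmin' T hTadm hTc)
    · exact hpos P (Or.inl h)
  · intro hL0
    exact ⟨realize_of_nonneg hn hμ0 hμ hpos hsadm hscard hsmin' hsmin (le_of_eq hL0.symm),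
      pol s, Or.inl (polyP_pol hscard hsadm), hL0⟩
end

section
/- Let m_1, m_2 ∈ ℝ with m_1 > 0, write k_1 := ⌊m_1⌋ and θ_1 := m_1 − k_1. Then the polynomial P(x) = (x−k_1)(x−k_1−1) satisfies L_P(m) ≤ L_Q(m) for every Q ∈ 𝒫_2, and (m_1, m_2) is realizable on ℕ₀ if and only if m_2 − m_1² ≥ θ_1(1−θ_1); it is I-realizable if this inequality is strict and B-realizable if equality holds. -/
open Polynomial

lemma lf_quad (r s : ℝ) (m : ℕ → ℝ) :
    Lf ((X - C r) * (X - C s)) m = m 2 - (r + s) * m 1 + r * s * m 0 := by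
  have hexp : (X - C r) * (X - C s) = X ^ 2 - C (r + s) * X + C (r * s) := by
    rw [C_add, C_mul]; ring
  have hdeg : ((X - C r) * (X - C s)).natDegree = 2 := by
    rw [natDegree_mul (X_sub_C_ne_zero r) (X_sub_C_ne_zero s), natDegree_X_sub_C,
      natDegree_X_sub_C]
  unfold Lf
  rw [Polynomial.sum_over_range' _ (by simp) 3 (by rw [hdeg]; norm_num)]
  rw [hexp]
  simp [Finset.sum_range_succ, coeff_X, coeff_C]
  ring

lemma lf_lin (r : ℝ) (m : ℕ → ℝ) : Lf (X - C r) m = m 1 - r * m 0 := by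
  unfold Lf
  rw [Polynomial.sum_over_range' _ (by simp) 2 (by rw [natDegree_X_sub_C]; norm_num)]
  simp [Finset.sum_range_succ, coeff_X, coeff_C]
  ring

lemma quad_nonneg (k x : ℕ) : 0 ≤ ((x : ℝ) - k) * ((x : ℝ) - (k + 1)) := by
  rcases le_or_gt x k with h | h
  · have : (x : ℝ) ≤ k := by exact_mod_cast h
    nlinarith
  · have : (k : ℝ) + 1 ≤ x := by exact_mod_cast h
    nlinarith

lemma polyP_two_mem (k : ℕ) : PolyP 2 ((X - C (k : ℝ)) * (X - C ((k : ℝ) + 1))) := by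
  have hcast : ((k : ℝ) + 1) = ((k + 1 : ℕ) : ℝ) := by push_cast; ring
  refine ⟨(monic_X_sub_C _).mul (monic_X_sub_C _), ?_, ?_, ?_⟩
  · rw [natDegree_mul (X_sub_C_ne_zero _) (X_sub_C_ne_zero _), natDegree_X_sub_C,
      natDegree_X_sub_C]
  · refine ⟨{k, k + 1}, ?_, ?_⟩
    · rw [Finset.card_insert_of_notMem (by simp), Finset.card_singleton]
    · rw [Finset.prod_insert (by simp), Finset.prod_singleton, hcast]
  · intro x
    simp only [eval_mul, eval_sub, eval_X, eval_C]
    exact quad_nonneg k x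

lemma polyP_two_char (Q : Polynomial ℝ) (h : PolyP 2 Q) :
    ∃ k : ℕ, Q = (X - C (k : ℝ)) * (X - C ((k : ℝ) + 1)) := by
  obtain ⟨-, -, ⟨S, hScard, hSprod⟩, hpos⟩ := h
  obtain ⟨a, b, hab, rfl⟩ := Finset.card_eq_two.mp hScard
  have hprod : Q = (X - C (a : ℝ)) * (X - C (b : ℝ)) := by
    rw [hSprod, Finset.prod_insert (by simpa using hab), Finset.prod_singleton]
  -- wlog a < b
  obtain ⟨u, v, huv, hQ⟩ : ∃ u v : ℕ, u < v ∧ Q = (X - C (u : ℝ)) * (X - C (v : ℝ)) := by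
    rcases lt_or_gt_of_ne hab with h' | h'
    · exact ⟨a, b, h', hprod⟩
    · exact ⟨b, a, h', by rw [hprod, mul_comm]⟩
  refine ⟨u, ?_⟩
  have hv : v = u + 1 := by
    by_contra hvne
    have hv2 : u + 2 ≤ v := by omega
    have := hpos (u + 1)
    rw [hQ] at this
    simp only [eval_mul, eval_sub, eval_X, eval_C] at this
    have h1 : ((u + 1 : ℕ) : ℝ) - u = 1 := by push_cast; ring
    have h2 : ((u + 1 : ℕ) : ℝ) - v ≤ -1 := by
      have : (v : ℝ) ≥ (u : ℝ) + 2 := by exact_mod_cast hv2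
      push_cast; linarith
    nlinarith
  rw [hQ, hv]; push_cast; ring_nf

lemma polyP_one_char (Q : Polynomial ℝ) (h : PolyP 1 Q) : Q = X - C 0 := by
  obtain ⟨-, -, ⟨S, hScard, hSprod⟩, hpos⟩ := h
  obtain ⟨a, rfl⟩ := Finset.card_eq_one.mp hScard
  rw [Finset.prod_singleton] at hSprod
  have := hpos 0
  rw [hSprod] at this ⊢
  simp only [eval_sub, eval_X, eval_C, Nat.cast_zero] at this
  have ha : (a : ℝ) = 0 := by
    have : (0 : ℝ) ≤ -a := by linarith
    have h2 : (0 : ℝ) ≤ (a : ℝ) := Nat.cast_nonneg a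
    linarith
  rw [ha]

lemma realizable_of_three (m : ℕ → ℝ) (a b c : ℕ) (hab : a < b) (hbc : b < c)
    (μa μb μc : ℝ) (ha : 0 ≤ μa) (hb : 0 ≤ μb) (hc : 0 ≤ μc)
    (heq : ∀ k ≤ 2, (a : ℝ) ^ k * μa + (b : ℝ) ^ k * μb + (c : ℝ) ^ k * μc = m k) :
    RealizableN0 2 m := by
  set μ : ℕ → ℝ := fun x => if x = a then μa else if x = b then μb else if x = c then μc else 0
    with hμ
  refine ⟨μ, ?_, ?_⟩
  · intro x
    simp only [hμ]
    split_ifs <;> first | exact ha | exact hb | exact hc | exact le_refl 0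
  · intro k hk
    have hs : HasSum (fun x : ℕ => (x : ℝ) ^ k * μ x)
        (∑ x ∈ ({a, b, c} : Finset ℕ), (x : ℝ) ^ k * μ x) := by
      apply hasSum_sum_of_ne_finset_zero
      intro x hx
      simp only [Finset.mem_insert, Finset.mem_singleton, not_or] at hx
      simp only [hμ, if_neg hx.1, if_neg hx.2.1, if_neg hx.2.2, mul_zero]
    have hne1 : a ≠ b := hab.ne
    have hne2 : a ≠ c := (hab.trans hbc).ne
    have hne3 : b ≠ c := hbc.ne
    have hsum : (∑ x ∈ ({a, b, c} : Finset ℕ), (x : ℝ) ^ k * μ x)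
        = (a : ℝ) ^ k * μa + (b : ℝ) ^ k * μb + (c : ℝ) ^ k * μc := by
      rw [Finset.sum_insert (by simp [hne1, hne2]),
        Finset.sum_insert (by simp [hne3]), Finset.sum_singleton]
      simp [hμ, hne1.symm, hne2.symm, hne3.symm, add_assoc]
    rw [hsum, heq k hk] at hs
    exact hs

lemma construct (m : ℕ → ℝ) (hm0 : m 0 = 1) (a : ℕ) (θ : ℝ) (hθpos : 0 < θ) (hθle : θ ≤ 1)
    (hm1 : m 1 = a + θ) (hq : 0 ≤ m 2 - (2 * a + 1) * m 1 + a * (a + 1)) :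
    RealizableN0 2 m := by
  -- choose a large third point
  have hex : ∃ c : ℕ, a + 2 ≤ c ∧ m 2 - (a : ℝ) * m 1 ≤ θ * c ∧
      ((a : ℝ) + 1) * m 1 - m 2 ≤ (1 - θ) * c := by
    rcases eq_or_lt_of_le hθle with h1 | h1
    · obtain ⟨N, hN⟩ := exists_nat_ge ((m 2 - (a : ℝ) * m 1) / θ)
      refine ⟨a + 2 + N, by omega, ?_, ?_⟩
      · have hc : ((m 2 - (a : ℝ) * m 1) / θ) ≤ ((a + 2 + N : ℕ) : ℝ) := by
          push_cast; push_cast at hN; linarith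
        rw [div_le_iff₀ hθpos] at hc; linarith
      · have h0 : (1 : ℝ) - θ = 0 := by rw [← h1]; ring
        rw [h0, zero_mul, hm1, ← h1] at *
        nlinarith [hq]
    · obtain ⟨N, hN⟩ := exists_nat_ge
        (max ((m 2 - (a : ℝ) * m 1) / θ) ((((a : ℝ) + 1) * m 1 - m 2) / (1 - θ)))
      have hN1 := (max_le_iff.mp hN).1
      have hN2 := (max_le_iff.mp hN).2
      refine ⟨a + 2 + N, by omega, ?_, ?_⟩
      · have hc : ((m 2 - (a : ℝ) * m 1) / θ) ≤ ((a + 2 + N : ℕ) : ℝ) := by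
          push_cast; push_cast at hN1; linarith
        rw [div_le_iff₀ hθpos] at hc; linarith
      · have hc : ((((a : ℝ) + 1) * m 1 - m 2) / (1 - θ)) ≤ ((a + 2 + N : ℕ) : ℝ) := by
          push_cast; push_cast at hN2; linarith
        rw [div_le_iff₀ (by linarith)] at hc; linarith
  obtain ⟨c, hc2, hcb, hca⟩ := hex
  have hac : (a : ℝ) < c := by exact_mod_cast (by omega : a < c)
  have hbc : (a : ℝ) + 1 < c := by
    have : ((a + 1 : ℕ) : ℝ) < c := by exact_mod_cast (by omega : a + 1 < c)
    push_cast at this; linarith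
  have hda : (0 : ℝ) < (c : ℝ) - a := by linarith
  have hdb : (0 : ℝ) < (c : ℝ) - (a + 1) := by linarith
  set μa : ℝ := ((1 - θ) * c + (m 2 - ((a : ℝ) + 1) * m 1)) / ((c : ℝ) - a) with hμa
  set μb : ℝ := (θ * c + ((a : ℝ) * m 1 - m 2)) / ((c : ℝ) - (a + 1)) with hμb
  set μc : ℝ := (m 2 - (2 * (a : ℝ) + 1) * m 1 + (a : ℝ) * ((a : ℝ) + 1)) /
      (((c : ℝ) - a) * ((c : ℝ) - (a + 1))) with hμc
  have hθeq : θ = m 1 - a := by linarith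
  apply realizable_of_three m a (a + 1) c (by omega) (by omega) μa μb μc
  · apply div_nonneg _ hda.le; linarith
  · apply div_nonneg _ hdb.le; linarith
  · exact div_nonneg hq (by positivity)
  · intro k hk
    have hd1 : ((c : ℝ) - a) ≠ 0 := hda.ne'
    have hd2 : ((c : ℝ) - (a + 1)) ≠ 0 := hdb.ne'
    interval_cases k
    · rw [hμa, hμb, hμc, hθeq, hm0]; push_cast; field_simp; ring
    · rw [hμa, hμb, hμc, hθeq]; push_cast; field_simp; ring
    · rw [hμa, hμb, hμc, hθeq]; push_cast; field_simp; ring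

/-- The `n = 2` case: with `k₁ = ⌊m₁⌋` and `θ₁ = m₁ - k₁`, the polynomial
`(x-k₁)(x-k₁-1)` minimizes `L_·(m)` over `𝒫_2`, and `(m₁,m₂)` is realizable on
`ℕ₀` iff `m₂ - m₁² ≥ θ₁(1-θ₁)` (I-realizable if strict, B-realizable if equality). -/
theorem case_n2 (m : ℕ → ℝ) (hm0 : m 0 = 1) (h1 : 0 < m 1)
    (k1 : ℤ) (hk1 : k1 = ⌊m 1⌋) (θ1 : ℝ) (hθ1 : θ1 = m 1 - (k1 : ℝ)) :
    (∀ Q, PolyP 2 Q →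
        Lf ((X - C (k1 : ℝ)) * (X - C ((k1 : ℝ) + 1))) m ≤ Lf Q m) ∧
      (RealizableN0 2 m ↔ θ1 * (1 - θ1) ≤ m 2 - m 1 ^ 2) ∧
      (θ1 * (1 - θ1) < m 2 - m 1 ^ 2 → IRealizable 2 m) ∧
      (m 2 - m 1 ^ 2 = θ1 * (1 - θ1) → BRealizable 2 m) := by
  have hK0 : (0 : ℤ) ≤ k1 := by rw [hk1]; exact Int.floor_nonneg.mpr h1.le
  set K : ℕ := k1.toNat with hKdef
  have hKcast : ((K : ℕ) : ℝ) = (k1 : ℝ) := by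
    rw [hKdef]; exact_mod_cast congrArg (Int.cast : ℤ → ℝ) (Int.toNat_of_nonneg hK0)
  have hfl : ((K : ℕ) : ℝ) ≤ m 1 := by
    rw [hKcast, hk1]; exact_mod_cast Int.floor_le (m 1)
  have hfu : m 1 < ((K : ℕ) : ℝ) + 1 := by
    rw [hKcast, hk1]; exact_mod_cast Int.lt_floor_add_one (m 1)
  have hθ0 : 0 ≤ θ1 := by rw [hθ1, ← hKcast]; linarith
  have hθlt : θ1 < 1 := by rw [hθ1, ← hKcast]; linarith
  have hkey : m 2 - (2 * ((K : ℕ) : ℝ) + 1) * m 1 + ((K : ℕ) : ℝ) * (((K : ℕ) : ℝ) + 1)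
      = m 2 - m 1 ^ 2 - θ1 * (1 - θ1) := by
    rw [hθ1, ← hKcast]; ring
  have lfP : Lf ((X - C (k1 : ℝ)) * (X - C ((k1 : ℝ) + 1))) m
      = m 2 - m 1 ^ 2 - θ1 * (1 - θ1) := by
    rw [lf_quad, hm0, hθ1, ← hKcast]; ring
  -- Part 1: minimality
  have hmin : ∀ Q, PolyP 2 Q →
      Lf ((X - C (k1 : ℝ)) * (X - C ((k1 : ℝ) + 1))) m ≤ Lf Q m := by
    intro Q hQ
    obtain ⟨k, rfl⟩ := polyP_two_char Q hQ
    rw [lfP, lf_quad, hm0]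
    rcases lt_trichotomy k K with h | h | h
    · have h' : (k : ℝ) + 1 ≤ (K : ℕ) := by exact_mod_cast h
      have hp : 0 ≤ (((K : ℕ) : ℝ) - k) * (2 * m 1 - ((k : ℝ) + (K : ℕ) + 1)) :=
        mul_nonneg (by linarith) (by linarith)
      nlinarith [hkey]
    · subst h
      linarith [hkey]
    · have h' : ((K : ℕ) : ℝ) + 1 ≤ (k : ℝ) := by exact_mod_cast h
      have hp : 0 ≤ ((k : ℝ) - (K : ℕ)) * (((k : ℝ) + (K : ℕ) + 1) - 2 * m 1) :=
        mul_nonneg (by linarith) (by linarith)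
      nlinarith [hkey]
  -- realizable → inequality
  have hfwd : RealizableN0 2 m → θ1 * (1 - θ1) ≤ m 2 - m 1 ^ 2 := by
    rintro ⟨μ, hμpos, hμsum⟩
    have h0 := hμsum 0 (by norm_num)
    have h1s := hμsum 1 (by norm_num)
    have h2s := hμsum 2 (by norm_num)
    have hcomb : HasSum (fun x : ℕ => ((x : ℝ) - (K : ℕ)) * ((x : ℝ) - ((K : ℕ) + 1)) * μ x)
        ((m 2 - (2 * ((K : ℕ) : ℝ) + 1) * m 1) + ((K : ℕ) : ℝ) * (((K : ℕ) : ℝ) + 1) * m 0) := by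
      have hfe : (fun x : ℕ => ((x : ℝ) - (K : ℕ)) * ((x : ℝ) - ((K : ℕ) + 1)) * μ x)
          = fun x : ℕ => ((x : ℝ) ^ 2 * μ x - (2 * ((K : ℕ) : ℝ) + 1) * ((x : ℝ) ^ 1 * μ x))
            + ((K : ℕ) : ℝ) * (((K : ℕ) : ℝ) + 1) * ((x : ℝ) ^ 0 * μ x) := by
        funext x; ring
      rw [hfe]
      exact (h2s.sub (h1s.mul_left _)).add (h0.mul_left _)
    have h0le : (0 : ℝ) ≤ (m 2 - (2 * ((K : ℕ) : ℝ) + 1) * m 1)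
        + ((K : ℕ) : ℝ) * (((K : ℕ) : ℝ) + 1) * m 0 :=
      hasSum_le (fun x => mul_nonneg (quad_nonneg K x) (hμpos x)) hasSum_zero hcomb
    rw [hm0] at h0le
    linarith [hkey]
  -- inequality → realizable
  have hbwd : θ1 * (1 - θ1) ≤ m 2 - m 1 ^ 2 → RealizableN0 2 m := by
    intro hge
    rcases eq_or_lt_of_le hθ0 with h0' | h0'
    · -- θ1 = 0 : use points K-1, K, c
      have hm1K : m 1 = ((K : ℕ) : ℝ) := by rw [hθ1, ← hKcast] at h0'; linarith
      have hK1 : 1 ≤ K := by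
        by_contra h
        have : K = 0 := by omega
        rw [this] at hm1K; simp at hm1K; linarith
      have ha : ((K - 1 : ℕ) : ℝ) = ((K : ℕ) : ℝ) - 1 := by
        rw [Nat.cast_sub hK1]; simp
      apply construct m hm0 (K - 1) 1 one_pos le_rfl
      · rw [ha, hm1K]; ring
      · rw [ha, hm1K]
        rw [hm1K, ← h0'] at hge
        nlinarith [hge]
    · -- θ1 > 0 : use points K, K+1, c
      apply construct m hm0 K θ1 h0' hθlt.le
      · rw [hθ1, ← hKcast]; ring
      · linarith [hkey]
  refine ⟨hmin, ⟨hfwd, hbwd⟩, ?_, ?_⟩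
  · -- I-realizable
    intro hlt
    refine ⟨hbwd hlt.le, ?_⟩
    intro P hP
    rcases hP with hP | hP
    · obtain ⟨k, rfl⟩ := polyP_two_char P hP
      have := hmin _ (polyP_two_mem k)
      rw [lfP] at this
      linarith
    · norm_num at hP
      rw [polyP_one_char P hP, lf_lin]
      simpa using h1
  · -- B-realizable
    intro heq
    refine ⟨hbwd heq.ge, (X - C (k1 : ℝ)) * (X - C ((k1 : ℝ) + 1)), Or.inl ?_, ?_⟩
    · have := polyP_two_mem K
      rw [hKcast] at this
      exact this
    · rw [lfP, heq]; ring
end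

section
/- Let m_1, m_2, m_3 ∈ ℝ be such that (m_1, m_2) is I-realizable on ℕ₀ (equivalently m_1 > 0 and m_2 − m_1² > θ_1(1−θ_1) with θ_1 the fractional part of m_1). Write k_2 := ⌊m_2/m_1⌋ and θ_2 := m_2/m_1 − k_2. Then the polynomial P(x) = x(x−k_2)(x−k_2−1) satisfies L_P(m) ≤ L_Q(m) for every Q ∈ 𝒫_3, and (m_1, m_2, m_3) is realizable on ℕ₀ if and only if m_3/m_1 − (m_2/m_1)² ≥ θ_2(1−θ_2); it is I-realizable if this inequality is strict and B-realizable if equality holds. -/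
open Polynomial

lemma Lf_apply (P : Polynomial ℝ) (m : ℕ → ℝ) (h : P.natDegree < 4) :
    Lf P m = P.coeff 0 * m 0 + P.coeff 1 * m 1 + P.coeff 2 * m 2 + P.coeff 3 * m 3 := by
  have e := Polynomial.sum_over_range' (p := P) (f := fun k a => a * m k)
    (fun n => by simp) 4 h
  rw [Lf, e]
  simp [Finset.sum_range_succ]

lemma Lf_cubic (m : ℕ → ℝ) (a b : ℝ) :
    Lf (X * ((X - C a) * (X - C b))) m = m 3 - (a + b) * m 2 + a * b * m 1 := by
  have h : (X * ((X - C a) * (X - C b)) : Polynomial ℝ) =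
      X ^ 3 - C (a + b) * X ^ 2 + C (a * b) * X := by
    simp only [C_add, C_mul]; ring
  rw [h, Lf_apply _ m (by exact Nat.lt_succ_of_le (by compute_degree))]
  simp only [coeff_add, coeff_sub, coeff_C_mul, coeff_X_pow, coeff_X, coeff_C]
  norm_num
  ring

lemma Lf_quad (m : ℕ → ℝ) (a b : ℝ) :
    Lf ((X - C a) * (X - C b)) m = m 2 - (a + b) * m 1 + a * b * m 0 := by
  have h : ((X - C a) * (X - C b) : Polynomial ℝ) = X ^ 2 - C (a + b) * X + C (a * b) := by
    simp only [C_add, C_mul]; ring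
  rw [h, Lf_apply _ m (by exact Nat.lt_succ_of_le (le_trans (by compute_degree) (by norm_num)))]
  simp only [coeff_add, coeff_sub, coeff_C_mul, coeff_X_pow, coeff_X, coeff_C]
  norm_num
  ring

lemma Lf_X (m : ℕ → ℝ) : Lf (X : Polynomial ℝ) m = m 1 := by
  rw [Lf_apply _ m (by simp)]
  simp [coeff_X]


lemma polyP1_X : PolyP 1 (X : ℝ[X]) := by
  refine ⟨monic_X, natDegree_X, ⟨{0}, by simp, by simp⟩, fun x => by simp⟩

lemma cub_nonneg (x k : ℕ) : 0 ≤ (x:ℝ) * (((x:ℝ) - k) * ((x:ℝ) - ((k:ℝ)+1))) := by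
  have h2 : (0:ℝ) ≤ x := by positivity
  rcases le_or_gt x k with h | h
  · have h1 : (x:ℝ) ≤ k := by exact_mod_cast h
    have h3 : 0 ≤ ((k:ℝ) - x) * (((k:ℝ) + 1) - x) := mul_nonneg (by linarith) (by linarith)
    calc (0:ℝ) ≤ (x:ℝ) * (((k:ℝ) - x) * (((k:ℝ) + 1) - x)) := mul_nonneg h2 h3
      _ = (x:ℝ) * (((x:ℝ) - k) * ((x:ℝ) - ((k:ℝ)+1))) := by ring
  · have h1 : (k:ℝ) + 1 ≤ x := by exact_mod_cast h
    exact mul_nonneg h2 (mul_nonneg (by linarith) (by linarith))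

lemma polyP2_mk (a : ℕ) : PolyP 2 ((X - C ((a:ℕ):ℝ)) * (X - C (((a:ℕ):ℝ)+1))) := by
  refine ⟨(monic_X_sub_C _).mul (monic_X_sub_C _), ?_, ⟨{a, a+1}, ?_, ?_⟩, fun x => ?_⟩
  · rw [(monic_X_sub_C _).natDegree_mul (monic_X_sub_C _), natDegree_X_sub_C, natDegree_X_sub_C]
  · rw [Finset.card_insert_of_notMem (by simp)]; simp
  · rw [Finset.prod_insert (by simp), Finset.prod_singleton]; push_cast; ring
  · simp only [eval_mul, eval_sub, eval_X, eval_C]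
    rcases le_or_gt x a with h | h
    · have h1 : (x:ℝ) ≤ a := by exact_mod_cast h
      have h3 : 0 ≤ ((a:ℝ) - x) * (((a:ℝ) + 1) - x) := mul_nonneg (by linarith) (by linarith)
      nlinarith
    · have h1 : (a:ℝ) + 1 ≤ x := by exact_mod_cast h
      exact mul_nonneg (by linarith) (by linarith)

lemma polyP3_mk (k : ℕ) (hk : 1 ≤ k) :
    PolyP 3 (X * ((X - C ((k:ℕ):ℝ)) * (X - C (((k:ℕ):ℝ)+1)))) := by
  refine ⟨monic_X.mul ((monic_X_sub_C _).mul (monic_X_sub_C _)),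
    ?_, ⟨{0, k, k+1}, ?_, ?_⟩, fun x => ?_⟩
  · rw [monic_X.natDegree_mul ((monic_X_sub_C _).mul (monic_X_sub_C _)),
      (monic_X_sub_C _).natDegree_mul (monic_X_sub_C _), natDegree_X, natDegree_X_sub_C,
      natDegree_X_sub_C]
  · rw [Finset.card_insert_of_notMem (by simp; omega),
      Finset.card_insert_of_notMem (by simp)]; simp
  · rw [Finset.prod_insert (by simp; omega), Finset.prod_insert (by simp),
      Finset.prod_singleton]
    simp only [Nat.cast_zero, map_zero, sub_zero, Nat.cast_add, Nat.cast_one]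
  · simp only [eval_mul, eval_sub, eval_X, eval_C]
    exact cub_nonneg x k


lemma cubic_core (a b c : ℕ) (hab : a < b) (hbc : b < c)
    (H : ∀ x : ℕ, 0 ≤ ((x:ℝ) - a) * (((x:ℝ) - b) * ((x:ℝ) - c))) :
    a = 0 ∧ c = b + 1 := by
  have hab' : (a:ℝ) < b := by exact_mod_cast hab
  have hbc' : (b:ℝ) < c := by exact_mod_cast hbc
  constructor
  · by_contra h
    have ha1 : (1:ℝ) ≤ a := by exact_mod_cast Nat.one_le_iff_ne_zero.2 h
    have h0 := H 0
    push_cast at h0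
    have hbp : (0:ℝ) < b := by linarith
    have hcp : (0:ℝ) < c := by linarith
    nlinarith [mul_pos hbp hcp]
  · by_contra h
    have hc2 : (b:ℝ) + 2 ≤ c := by exact_mod_cast (by omega : b + 2 ≤ c)
    have h0 := H (b + 1)
    push_cast at h0
    have p1 : (0:ℝ) < (b:ℝ) + 1 - a := by linarith
    nlinarith [mul_pos p1 (show (0:ℝ) < (c:ℝ) - b - 1 by linarith)]

lemma polyP3_struct (Q : Polynomial ℝ) (hQ : PolyP 3 Q) :
    ∃ k : ℕ, 1 ≤ k ∧ Q = X * ((X - C ((k:ℕ):ℝ)) * (X - C (((k:ℕ):ℝ)+1))) := by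
  obtain ⟨-, -, ⟨S, hcard, hprod⟩, hpos⟩ := hQ
  obtain ⟨a, b, c, hab, hac, hbc, rfl⟩ := Finset.card_eq_three.mp hcard
  have hev : ∀ x : ℕ, Q.eval (x:ℝ) = ((x:ℝ) - a) * (((x:ℝ) - b) * ((x:ℝ) - c)) := by
    intro x
    rw [hprod, Finset.prod_insert (by simp [hab, hac]), Finset.prod_insert (by simp [hbc]),
      Finset.prod_singleton]
    simp [eval_mul]
  have hpos' : ∀ x : ℕ, 0 ≤ ((x:ℝ) - a) * (((x:ℝ) - b) * ((x:ℝ) - c)) :=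
    fun x => le_of_le_of_eq (hpos x) (hev x)
  have finish : ∀ u v w : ℕ, u < v → v < w →
      (∀ x : ℕ, 0 ≤ ((x:ℝ) - u) * (((x:ℝ) - v) * ((x:ℝ) - w))) →
      ({a, b, c} : Finset ℕ) = {u, v, w} →
      ∃ k : ℕ, 1 ≤ k ∧ Q = X * ((X - C ((k:ℕ):ℝ)) * (X - C (((k:ℕ):ℝ)+1))) := by
    intro u v w huv hvw hp hSeq
    obtain ⟨hu0, hw⟩ := cubic_core u v w huv hvw hp
    subst hu0; subst hw
    refine ⟨v, by omega, ?_⟩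
    rw [hprod, hSeq, Finset.prod_insert (by simp; omega), Finset.prod_insert (by simp),
      Finset.prod_singleton]
    simp only [Nat.cast_zero, map_zero, sub_zero, Nat.cast_add, Nat.cast_one]
  have htri : (a < b ∧ b < c) ∨ (a < c ∧ c < b) ∨ (b < a ∧ a < c) ∨ (b < c ∧ c < a) ∨
      (c < a ∧ a < b) ∨ (c < b ∧ b < a) := by omega
  rcases htri with ⟨h1, h2⟩ | ⟨h1, h2⟩ | ⟨h1, h2⟩ | ⟨h1, h2⟩ | ⟨h1, h2⟩ | ⟨h1, h2⟩
  · exact finish a b c h1 h2 (fun x => (hpos' x).trans_eq (by ring)) (by first | rfl | (ext y; simp only [Finset.mem_insert, Finset.mem_singleton]; tauto))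
  · exact finish a c b h1 h2 (fun x => (hpos' x).trans_eq (by ring)) (by first | rfl | (ext y; simp only [Finset.mem_insert, Finset.mem_singleton]; tauto))
  · exact finish b a c h1 h2 (fun x => (hpos' x).trans_eq (by ring)) (by first | rfl | (ext y; simp only [Finset.mem_insert, Finset.mem_singleton]; tauto))
  · exact finish b c a h1 h2 (fun x => (hpos' x).trans_eq (by ring)) (by first | rfl | (ext y; simp only [Finset.mem_insert, Finset.mem_singleton]; tauto))
  · exact finish c a b h1 h2 (fun x => (hpos' x).trans_eq (by ring)) (by first | rfl | (ext y; simp only [Finset.mem_insert, Finset.mem_singleton]; tauto))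
  · exact finish c b a h1 h2 (fun x => (hpos' x).trans_eq (by ring)) (by first | rfl | (ext y; simp only [Finset.mem_insert, Finset.mem_singleton]; tauto))


lemma hasSum_pt (k p : ℕ) (w : ℝ) :
    HasSum (fun x : ℕ => (x:ℝ) ^ k * (if x = p then w else 0)) (((p:ℕ):ℝ) ^ k * w) := by
  have h := hasSum_ite_eq p (((p:ℕ):ℝ) ^ k * w)
  have he : (fun x : ℕ => (x:ℝ) ^ k * (if x = p then w else 0))
      = fun x : ℕ => if x = p then ((p:ℕ):ℝ) ^ k * w else 0 := by
    funext x
    split_ifs with hx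
    · subst hx; rfl
    · exact mul_zero _
  rw [he]; exact h

lemma lag0 (a b N m1 m2 m3 : ℝ) (ha : a ≠ 0) (hb : b ≠ 0) (hN : N ≠ 0)
    (hba : b - a ≠ 0) (hNa : N - a ≠ 0) (hNb : N - b ≠ 0) :
    (N * (m2 - (a + b) * m1 + a * b) - (m3 - (a + b) * m2 + a * b * m1)) / (a * b * N)
      + ((N * (b * m1 - m2) + (m3 - b * m2)) / (a * (b - a) * (N - a))
      + ((N * (m2 - a * m1) - (m3 - a * m2)) / (b * (b - a) * (N - b))
      + (m3 - (a + b) * m2 + a * b * m1) / (N * (N - a) * (N - b)))) = 1 := by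
  field_simp
  ring

lemma lag1 (a b N m1 m2 m3 : ℝ) (ha : a ≠ 0) (hb : b ≠ 0) (hN : N ≠ 0)
    (hba : b - a ≠ 0) (hNa : N - a ≠ 0) (hNb : N - b ≠ 0) :
    a * ((N * (b * m1 - m2) + (m3 - b * m2)) / (a * (b - a) * (N - a)))
      + (b * ((N * (m2 - a * m1) - (m3 - a * m2)) / (b * (b - a) * (N - b)))
      + N * ((m3 - (a + b) * m2 + a * b * m1) / (N * (N - a) * (N - b)))) = m1 := by
  field_simp
  ring

lemma lag2 (a b N m1 m2 m3 : ℝ) (ha : a ≠ 0) (hb : b ≠ 0) (hN : N ≠ 0)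
    (hba : b - a ≠ 0) (hNa : N - a ≠ 0) (hNb : N - b ≠ 0) :
    a ^ 2 * ((N * (b * m1 - m2) + (m3 - b * m2)) / (a * (b - a) * (N - a)))
      + (b ^ 2 * ((N * (m2 - a * m1) - (m3 - a * m2)) / (b * (b - a) * (N - b)))
      + N ^ 2 * ((m3 - (a + b) * m2 + a * b * m1) / (N * (N - a) * (N - b)))) = m2 := by
  field_simp
  ring

lemma lag3 (a b N m1 m2 m3 : ℝ) (ha : a ≠ 0) (hb : b ≠ 0) (hN : N ≠ 0)
    (hba : b - a ≠ 0) (hNa : N - a ≠ 0) (hNb : N - b ≠ 0) :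
    a ^ 3 * ((N * (b * m1 - m2) + (m3 - b * m2)) / (a * (b - a) * (N - a)))
      + (b ^ 3 * ((N * (m2 - a * m1) - (m3 - a * m2)) / (b * (b - a) * (N - b)))
      + N ^ 3 * ((m3 - (a + b) * m2 + a * b * m1) / (N * (N - a) * (N - b)))) = m3 := by
  field_simp
  ring

lemma build (m : ℕ → ℝ) (hm0 : m 0 = 1) (a b : ℕ) (ha : 0 < a) (hab : a < b)
    (h1 : 0 < m 1)
    (hA : 0 < m 2 - (a:ℝ) * m 1)
    (hB : 0 ≤ (b:ℝ) * m 1 - m 2)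
    (hL2 : 0 < m 2 - ((a:ℝ) + (b:ℝ)) * m 1 + (a:ℝ) * (b:ℝ))
    (hL3 : 0 ≤ m 3 - ((a:ℝ) + (b:ℝ)) * m 2 + (a:ℝ) * (b:ℝ) * m 1) :
    RealizableN0 3 m := by
  obtain ⟨N, hN⟩ := exists_nat_gt (max (b:ℝ)
    (max ((m 3 - ((a:ℝ) + (b:ℝ)) * m 2 + (a:ℝ) * (b:ℝ) * m 1) /
          (m 2 - ((a:ℝ) + (b:ℝ)) * m 1 + (a:ℝ) * (b:ℝ)))
      (max ((m 3 - (a:ℝ) * m 2) / (m 2 - (a:ℝ) * m 1))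
        (-(m 3 - (b:ℝ) * m 2) / ((b:ℝ) * m 1 - m 2)))))
  have hNb : (b:ℝ) < N := lt_of_le_of_lt (le_max_left _ _) hN
  have hab' : (a:ℝ) < b := by exact_mod_cast hab
  have ha' : (0:ℝ) < a := by exact_mod_cast ha
  have hb' : (0:ℝ) < b := lt_trans ha' hab'
  have hN0 : (0:ℝ) < N := lt_trans hb' hNb
  have hNa : (a:ℝ) < N := lt_trans hab' hNb
  have hw0 : 0 ≤ (N:ℝ) * (m 2 - ((a:ℝ) + (b:ℝ)) * m 1 + (a:ℝ) * (b:ℝ))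
      - (m 3 - ((a:ℝ) + (b:ℝ)) * m 2 + (a:ℝ) * (b:ℝ) * m 1) := by
    have h := lt_of_le_of_lt (le_trans (le_max_left _ _) (le_max_right _ _)) hN
    have := (div_lt_iff₀ hL2).mp h
    linarith
  have hwb : 0 ≤ (N:ℝ) * (m 2 - (a:ℝ) * m 1) - (m 3 - (a:ℝ) * m 2) := by
    have h := lt_of_le_of_lt
      (le_trans (le_trans (le_max_left _ _) (le_max_right _ _)) (le_max_right _ _)) hN
    have := (div_lt_iff₀ hA).mp h
    linarith
  have hwa : 0 ≤ (N:ℝ) * ((b:ℝ) * m 1 - m 2) + (m 3 - (b:ℝ) * m 2) := by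
    rcases eq_or_lt_of_le hB with heq | hlt
    · nlinarith [hL3, heq]
    · have h := lt_of_le_of_lt
        (le_trans (le_trans (le_max_right _ _) (le_max_right _ _)) (le_max_right _ _)) hN
      have := (div_lt_iff₀ hlt).mp h
      linarith
  have hane : (a:ℝ) ≠ 0 := ne_of_gt ha'
  have hbne : (b:ℝ) ≠ 0 := ne_of_gt hb'
  have hNne : (N:ℝ) ≠ 0 := ne_of_gt hN0
  have hbane : (b:ℝ) - (a:ℝ) ≠ 0 := ne_of_gt (by linarith)
  have hNane : (N:ℝ) - (a:ℝ) ≠ 0 := ne_of_gt (by linarith)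
  have hNbne : (N:ℝ) - (b:ℝ) ≠ 0 := ne_of_gt (by linarith)
  refine ⟨fun x => (if x = 0 then (((N:ℝ) * (m 2 - ((a:ℝ) + (b:ℝ)) * m 1 + (a:ℝ) * (b:ℝ)) - (m 3 - ((a:ℝ) + (b:ℝ)) * m 2 + (a:ℝ) * (b:ℝ) * m 1)) / ((a:ℝ) * (b:ℝ) * (N:ℝ))) else 0) + ((if x = a then (((N:ℝ) * ((b:ℝ) * m 1 - m 2) + (m 3 - (b:ℝ) * m 2)) / ((a:ℝ) * ((b:ℝ) - (a:ℝ)) * ((N:ℝ) - (a:ℝ)))) else 0) + ((if x = b then (((N:ℝ) * (m 2 - (a:ℝ) * m 1) - (m 3 - (a:ℝ) * m 2)) / ((b:ℝ) * ((b:ℝ) - (a:ℝ)) * ((N:ℝ) - (b:ℝ)))) else 0) + (if x = N then ((m 3 - ((a:ℝ) + (b:ℝ)) * m 2 + (a:ℝ) * (b:ℝ) * m 1) / ((N:ℝ) * ((N:ℝ) - (a:ℝ)) * ((N:ℝ) - (b:ℝ)))) else 0))), fun x => ?_, fun k hk => ?_⟩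
  · have p0 : 0 ≤ (((N:ℝ) * (m 2 - ((a:ℝ) + (b:ℝ)) * m 1 + (a:ℝ) * (b:ℝ)) - (m 3 - ((a:ℝ) + (b:ℝ)) * m 2 + (a:ℝ) * (b:ℝ) * m 1)) / ((a:ℝ) * (b:ℝ) * (N:ℝ))) := div_nonneg hw0 (by positivity)
    have pa : 0 ≤ (((N:ℝ) * ((b:ℝ) * m 1 - m 2) + (m 3 - (b:ℝ) * m 2)) / ((a:ℝ) * ((b:ℝ) - (a:ℝ)) * ((N:ℝ) - (a:ℝ)))) :=
      div_nonneg hwa (mul_nonneg (mul_nonneg ha'.le (by linarith)) (by linarith))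
    have pb : 0 ≤ (((N:ℝ) * (m 2 - (a:ℝ) * m 1) - (m 3 - (a:ℝ) * m 2)) / ((b:ℝ) * ((b:ℝ) - (a:ℝ)) * ((N:ℝ) - (b:ℝ)))) :=
      div_nonneg hwb (mul_nonneg (mul_nonneg hb'.le (by linarith)) (by linarith))
    have pN : 0 ≤ ((m 3 - ((a:ℝ) + (b:ℝ)) * m 2 + (a:ℝ) * (b:ℝ) * m 1) / ((N:ℝ) * ((N:ℝ) - (a:ℝ)) * ((N:ℝ) - (b:ℝ)))) :=
      div_nonneg hL3 (mul_nonneg (mul_nonneg hN0.le (by linarith)) (by linarith))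
    dsimp only
    split_ifs <;> linarith
  · have total := (hasSum_pt k 0 (((N:ℝ) * (m 2 - ((a:ℝ) + (b:ℝ)) * m 1 + (a:ℝ) * (b:ℝ)) - (m 3 - ((a:ℝ) + (b:ℝ)) * m 2 + (a:ℝ) * (b:ℝ) * m 1)) / ((a:ℝ) * (b:ℝ) * (N:ℝ)))).add ((hasSum_pt k a (((N:ℝ) * ((b:ℝ) * m 1 - m 2) + (m 3 - (b:ℝ) * m 2)) / ((a:ℝ) * ((b:ℝ) - (a:ℝ)) * ((N:ℝ) - (a:ℝ))))).add
      ((hasSum_pt k b (((N:ℝ) * (m 2 - (a:ℝ) * m 1) - (m 3 - (a:ℝ) * m 2)) / ((b:ℝ) * ((b:ℝ) - (a:ℝ)) * ((N:ℝ) - (b:ℝ))))).add (hasSum_pt k N ((m 3 - ((a:ℝ) + (b:ℝ)) * m 2 + (a:ℝ) * (b:ℝ) * m 1) / ((N:ℝ) * ((N:ℝ) - (a:ℝ)) * ((N:ℝ) - (b:ℝ)))))))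
    have hval : ((0:ℕ):ℝ) ^ k * (((N:ℝ) * (m 2 - ((a:ℝ) + (b:ℝ)) * m 1 + (a:ℝ) * (b:ℝ)) - (m 3 - ((a:ℝ) + (b:ℝ)) * m 2 + (a:ℝ) * (b:ℝ) * m 1)) / ((a:ℝ) * (b:ℝ) * (N:ℝ))) + (((a:ℕ):ℝ) ^ k * (((N:ℝ) * ((b:ℝ) * m 1 - m 2) + (m 3 - (b:ℝ) * m 2)) / ((a:ℝ) * ((b:ℝ) - (a:ℝ)) * ((N:ℝ) - (a:ℝ)))) +
        (((b:ℕ):ℝ) ^ k * (((N:ℝ) * (m 2 - (a:ℝ) * m 1) - (m 3 - (a:ℝ) * m 2)) / ((b:ℝ) * ((b:ℝ) - (a:ℝ)) * ((N:ℝ) - (b:ℝ)))) + ((N:ℕ):ℝ) ^ k * ((m 3 - ((a:ℝ) + (b:ℝ)) * m 2 + (a:ℝ) * (b:ℝ) * m 1) / ((N:ℝ) * ((N:ℝ) - (a:ℝ)) * ((N:ℝ) - (b:ℝ)))))) = m k := by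
      interval_cases k
      · rw [hm0]
        norm_num
        linarith [lag0 (a:ℝ) (b:ℝ) (N:ℝ) (m 1) (m 2) (m 3) hane hbne hNne hbane hNane hNbne]
      · norm_num
        linarith [lag1 (a:ℝ) (b:ℝ) (N:ℝ) (m 1) (m 2) (m 3) hane hbne hNne hbane hNane hNbne]
      · norm_num
        linarith [lag2 (a:ℝ) (b:ℝ) (N:ℝ) (m 1) (m 2) (m 3) hane hbne hNne hbane hNane hNbne]
      · norm_num
        linarith [lag3 (a:ℝ) (b:ℝ) (N:ℝ) (m 1) (m 2) (m 3) hane hbne hNne hbane hNane hNbne]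
    rw [hval] at total
    have hfe : (fun x : ℕ => (x:ℝ) ^ k * ((if x = 0 then (((N:ℝ) * (m 2 - ((a:ℝ) + (b:ℝ)) * m 1 + (a:ℝ) * (b:ℝ)) - (m 3 - ((a:ℝ) + (b:ℝ)) * m 2 + (a:ℝ) * (b:ℝ) * m 1)) / ((a:ℝ) * (b:ℝ) * (N:ℝ))) else 0) + ((if x = a then (((N:ℝ) * ((b:ℝ) * m 1 - m 2) + (m 3 - (b:ℝ) * m 2)) / ((a:ℝ) * ((b:ℝ) - (a:ℝ)) * ((N:ℝ) - (a:ℝ)))) else 0) + ((if x = b then (((N:ℝ) * (m 2 - (a:ℝ) * m 1) - (m 3 - (a:ℝ) * m 2)) / ((b:ℝ) * ((b:ℝ) - (a:ℝ)) * ((N:ℝ) - (b:ℝ)))) else 0) + (if x = N then ((m 3 - ((a:ℝ) + (b:ℝ)) * m 2 + (a:ℝ) * (b:ℝ) * m 1) / ((N:ℝ) * ((N:ℝ) - (a:ℝ)) * ((N:ℝ) - (b:ℝ)))) else 0)))))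
        = fun x : ℕ => (x:ℝ) ^ k * (if x = 0 then (((N:ℝ) * (m 2 - ((a:ℝ) + (b:ℝ)) * m 1 + (a:ℝ) * (b:ℝ)) - (m 3 - ((a:ℝ) + (b:ℝ)) * m 2 + (a:ℝ) * (b:ℝ) * m 1)) / ((a:ℝ) * (b:ℝ) * (N:ℝ))) else 0) +
          ((x:ℝ) ^ k * (if x = a then (((N:ℝ) * ((b:ℝ) * m 1 - m 2) + (m 3 - (b:ℝ) * m 2)) / ((a:ℝ) * ((b:ℝ) - (a:ℝ)) * ((N:ℝ) - (a:ℝ)))) else 0) +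
          ((x:ℝ) ^ k * (if x = b then (((N:ℝ) * (m 2 - (a:ℝ) * m 1) - (m 3 - (a:ℝ) * m 2)) / ((b:ℝ) * ((b:ℝ) - (a:ℝ)) * ((N:ℝ) - (b:ℝ)))) else 0) +
          (x:ℝ) ^ k * (if x = N then ((m 3 - ((a:ℝ) + (b:ℝ)) * m 2 + (a:ℝ) * (b:ℝ) * m 1) / ((N:ℝ) * ((N:ℝ) - (a:ℝ)) * ((N:ℝ) - (b:ℝ)))) else 0))) := by
      funext x; ring
    rw [hfe]
    exact total

set_option maxHeartbeats 1600000 in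
/-- The `n = 3` case: if `(m₁,m₂)` is I-realizable then, with `k₂ = ⌊m₂/m₁⌋` and
`θ₂ = m₂/m₁ - k₂`, the polynomial `x(x-k₂)(x-k₂-1)` minimizes `L_·(m)` over
`𝒫_3`, and `(m₁,m₂,m₃)` is realizable on `ℕ₀` iff
`m₃/m₁ - (m₂/m₁)² ≥ θ₂(1-θ₂)` (I-realizable if strict, B-realizable if equality). -/
theorem case_n3 (m : ℕ → ℝ) (hm0 : m 0 = 1) (hI : IRealizable 2 m)
    (k2 : ℤ) (hk2 : k2 = ⌊m 2 / m 1⌋) (θ2 : ℝ) (hθ2 : θ2 = m 2 / m 1 - (k2 : ℝ)) :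
    (∀ Q, PolyP 3 Q →
        Lf (X * ((X - C (k2 : ℝ)) * (X - C ((k2 : ℝ) + 1)))) m ≤ Lf Q m) ∧
      (RealizableN0 3 m ↔ θ2 * (1 - θ2) ≤ m 3 / m 1 - (m 2 / m 1) ^ 2) ∧
      (θ2 * (1 - θ2) < m 3 / m 1 - (m 2 / m 1) ^ 2 → IRealizable 3 m) ∧
      (m 3 / m 1 - (m 2 / m 1) ^ 2 = θ2 * (1 - θ2) → BRealizable 3 m) := by
  -- basic facts from I-realizability of (m 1, m 2)
  have hx1 : PolyP (2 - 1) (X : Polynomial ℝ) := by norm_num; exact polyP1_X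
  have h1 : 0 < m 1 := by
    have := hI.2 X (Or.inr hx1)
    rwa [Lf_X] at this
  have hm1ne : m 1 ≠ 0 := ne_of_gt h1
  have hQ2 : ∀ a : ℕ, 0 < m 2 - ((a:ℝ) + ((a:ℝ) + 1)) * m 1 + (a:ℝ) * ((a:ℝ) + 1) := by
    intro a
    have := hI.2 _ (Or.inl (polyP2_mk a))
    rwa [Lf_quad, hm0, mul_one] at this
  have hm21 : m 1 < m 2 := by have := hQ2 0; push_cast at this; linarith
  have hr1 : 1 < m 2 / m 1 := (one_lt_div h1).2 hm21
  have hk21 : 1 ≤ k2 := by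
    rw [hk2]
    exact Int.le_floor.2 (by push_cast; exact hr1.le)
  have hθ0 : 0 ≤ θ2 := by
    rw [hθ2, hk2]
    have := Int.floor_le (m 2 / m 1)
    linarith
  have hθ1 : θ2 < 1 := by
    rw [hθ2, hk2]
    have := Int.lt_floor_add_one (m 2 / m 1)
    linarith
  have hm2' : m 2 = m 1 * (θ2 + (k2:ℝ)) := by
    rw [hθ2]
    field_simp
    ring
  have hk2nn : (0:ℤ) ≤ k2 := by omega
  have hkn : ((k2.toNat : ℕ) : ℝ) = (k2:ℝ) := by exact_mod_cast Int.toNat_of_nonneg hk2nn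
  have hkn1 : 1 ≤ k2.toNat := by omega
  -- the key identity for Lf of the minimizing cubic
  have hLfP : Lf (X * ((X - C (k2:ℝ)) * (X - C ((k2:ℝ) + 1)))) m
      = m 1 * ((m 3 / m 1 - (m 2 / m 1) ^ 2) - θ2 * (1 - θ2)) := by
    rw [Lf_cubic, hθ2]
    field_simp
    ring
  -- Part 1 : minimality
  have part1 : ∀ Q, PolyP 3 Q →
      Lf (X * ((X - C (k2:ℝ)) * (X - C ((k2:ℝ) + 1)))) m ≤ Lf Q m := by
    intro Q hQ
    obtain ⟨k, hk1, rfl⟩ := polyP3_struct Q hQ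
    rw [Lf_cubic, Lf_cubic]
    have key : (m 3 - ((k:ℝ) + ((k:ℝ) + 1)) * m 2 + (k:ℝ) * ((k:ℝ) + 1) * m 1)
        - (m 3 - ((k2:ℝ) + ((k2:ℝ) + 1)) * m 2 + (k2:ℝ) * ((k2:ℝ) + 1) * m 1)
        = m 1 * (((k:ℝ) - (k2:ℝ)) * (((k:ℝ) - (k2:ℝ)) + 1 - 2 * θ2)) := by
      rw [hm2']; ring
    rcases lt_trichotomy ((k:ℤ)) k2 with hlt | heq | hgt
    · have h' : (k:ℤ) + 1 ≤ k2 := hlt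
      have h'' : (k:ℝ) + 1 ≤ (k2:ℝ) := by exact_mod_cast h'
      have e1 : 0 ≤ ((k2:ℝ) - (k:ℝ)) * (2 * θ2 - ((k:ℝ) - (k2:ℝ) + 1)) :=
        mul_nonneg (by linarith) (by linarith)
      nlinarith [key, e1, h1]
    · have h'' : (k:ℝ) = (k2:ℝ) := by exact_mod_cast heq
      rw [h'']
    · have h' : k2 + 1 ≤ (k:ℤ) := hgt
      have h'' : (k2:ℝ) + 1 ≤ (k:ℝ) := by exact_mod_cast h'
      have e1 : 0 ≤ ((k:ℝ) - (k2:ℝ)) * (((k:ℝ) - (k2:ℝ)) + 1 - 2 * θ2) :=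
        mul_nonneg (by linarith) (by linarith)
      nlinarith [key, e1, h1]
  -- forward direction of the iff
  have hfwd : RealizableN0 3 m → θ2 * (1 - θ2) ≤ m 3 / m 1 - (m 2 / m 1) ^ 2 := by
    rintro ⟨μ, hμ, hs⟩
    have combo : HasSum
        (fun x : ℕ => ((x:ℝ) * (((x:ℝ) - (k2:ℝ)) * ((x:ℝ) - ((k2:ℝ) + 1)))) * μ x)
        (m 3 - ((k2:ℝ) + ((k2:ℝ) + 1)) * m 2 + (k2:ℝ) * ((k2:ℝ) + 1) * m 1) := by
      have h3 := hs 3 (by norm_num)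
      have h2 := (hs 2 (by norm_num)).mul_left ((k2:ℝ) + ((k2:ℝ) + 1))
      have hh1 := (hs 1 (by norm_num)).mul_left ((k2:ℝ) * ((k2:ℝ) + 1))
      have := (h3.sub h2).add hh1
      have hfe : (fun x : ℕ => ((x:ℝ) ^ 3 * μ x -
            ((k2:ℝ) + ((k2:ℝ) + 1)) * ((x:ℝ) ^ 2 * μ x)) +
            (k2:ℝ) * ((k2:ℝ) + 1) * ((x:ℝ) ^ 1 * μ x))
          = fun x : ℕ => ((x:ℝ) * (((x:ℝ) - (k2:ℝ)) * ((x:ℝ) - ((k2:ℝ) + 1)))) * μ x := by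
        funext x; ring
      rw [hfe] at this
      exact this
    have hge : (0:ℝ) ≤ m 3 - ((k2:ℝ) + ((k2:ℝ) + 1)) * m 2 + (k2:ℝ) * ((k2:ℝ) + 1) * m 1 := by
      refine hasSum_le (fun x => ?_) hasSum_zero combo
      have hcn := cub_nonneg x k2.toNat
      rw [hkn] at hcn
      exact mul_nonneg hcn (hμ x)
    have hvv : m 3 - ((k2:ℝ) + ((k2:ℝ) + 1)) * m 2 + (k2:ℝ) * ((k2:ℝ) + 1) * m 1
        = m 1 * ((m 3 / m 1 - (m 2 / m 1) ^ 2) - θ2 * (1 - θ2)) := by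
      rw [← Lf_cubic m (k2:ℝ) ((k2:ℝ) + 1), hLfP]
    rw [hvv] at hge
    nlinarith [hge, h1]
  -- backward direction of the iff
  have hbwd : θ2 * (1 - θ2) ≤ m 3 / m 1 - (m 2 / m 1) ^ 2 → RealizableN0 3 m := by
    intro hc
    rcases eq_or_lt_of_le hθ0 with hz | hpos
    · -- θ2 = 0
      have hm2k : m 2 = m 1 * (k2:ℝ) := by rw [hm2', ← hz]; ring
      have hdiv : m 2 / m 1 = (k2:ℝ) := by rw [hm2k]; field_simp
      have hk22 : 2 ≤ k2 := by
        have h' : (1:ℝ) < (k2:ℝ) := by rw [← hdiv]; exact hr1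
        have : (1:ℤ) < k2 := by exact_mod_cast h'
        omega
      have hkn2 : 2 ≤ k2.toNat := by omega
      have hacast : ((k2.toNat - 1 : ℕ) : ℝ) = (k2:ℝ) - 1 := by
        rw [Nat.cast_sub (by omega)]
        rw [hkn]
        norm_num
      have hstep : ((k2.toNat - 1 : ℕ) : ℝ) + 1 = ((k2.toNat : ℕ) : ℝ) := by
        rw [hacast, hkn]; ring
      have hd : (k2:ℝ) ^ 2 * m 1 ≤ m 3 := by
        have hc' : (k2:ℝ) ^ 2 ≤ m 3 / m 1 := by
          rw [← hdiv]
          have : θ2 * (1 - θ2) = 0 := by rw [← hz]; ring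
          linarith
        exact (le_div_iff₀ h1).mp hc'
      refine build m hm0 (k2.toNat - 1) k2.toNat (by omega) (by omega) h1 ?_ ?_ ?_ ?_
      · rw [hacast, hm2k]; linarith
      · rw [hkn, hm2k]; linarith
      · have := hQ2 (k2.toNat - 1)
        rw [hstep] at this
        exact this
      · rw [hacast, hkn, hm2k]
        nlinarith [hd]
    · -- θ2 > 0
      have hc1 : ((k2.toNat + 1 : ℕ) : ℝ) = ((k2.toNat : ℕ) : ℝ) + 1 := by push_cast; ring
      refine build m hm0 k2.toNat (k2.toNat + 1) (by omega) (by omega) h1 ?_ ?_ ?_ ?_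
      · rw [hkn, hm2']
        nlinarith [mul_pos h1 hpos]
      · rw [hc1, hkn, hm2']
        nlinarith [mul_nonneg h1.le (by linarith : (0:ℝ) ≤ 1 - θ2)]
      · rw [hc1]
        exact hQ2 k2.toNat
      · rw [hc1, hkn]
        have hnn : 0 ≤ m 1 * ((m 3 / m 1 - (m 2 / m 1) ^ 2) - θ2 * (1 - θ2)) :=
          mul_nonneg h1.le (by linarith)
        have hLfP' : m 3 - ((k2:ℝ) + ((k2:ℝ) + 1)) * m 2 + (k2:ℝ) * ((k2:ℝ) + 1) * m 1
            = m 1 * ((m 3 / m 1 - (m 2 / m 1) ^ 2) - θ2 * (1 - θ2)) :=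
          (Lf_cubic m (k2:ℝ) ((k2:ℝ) + 1)).symm.trans hLfP
        linarith
  refine ⟨part1, ⟨hfwd, hbwd⟩, ?_, ?_⟩
  · -- strict ⇒ I-realizable
    intro hstrict
    refine ⟨hbwd hstrict.le, fun Q hQ => ?_⟩
    rcases hQ with h | h
    · have hPpos : 0 < Lf (X * ((X - C (k2:ℝ)) * (X - C ((k2:ℝ) + 1)))) m := by
        rw [hLfP]
        exact mul_pos h1 (by linarith)
      exact lt_of_lt_of_le hPpos (part1 Q h)
    · have h' : PolyP 2 Q := by norm_num at h; exact h
      exact hI.2 Q (Or.inl h')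
  · -- equality ⇒ B-realizable
    intro heq
    refine ⟨hbwd (le_of_eq heq.symm), ⟨X * ((X - C (k2:ℝ)) * (X - C ((k2:ℝ) + 1))),
      Or.inl ?_, ?_⟩⟩
    · have := polyP3_mk k2.toNat hkn1
      rwa [hkn] at this
    · rw [hLfP, heq]
      ring
end
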